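/- arXiv:1111.2970 — 7 statements merged into one kernel-verified Lean document; each statement's English description precedes it below -/
import Mathlib

section
/- For every natural number n and every real δ > 0, |T_n(-1-δ)| ≥ 1 + n^2 δ, where T_n is the Chebyshev polynomial of the first kind of degree n. -/
open Polynomial

lemma cheb_aux (δ : ℝ) (hδ : 0 < δ) : ∀ n : ℕ,
    (1 + (n : ℝ) ^ 2 * δ ≤ (-1) ^ n * (Polynomial.Chebyshev.T ℝ n).eval (-1 - δ)) ∧
    ((2 * (n : ℝ) + 1) * δ ≤
      (-1) ^ (n + 1) * (Polynomial.Chebyshev.T ℝ (n + 1)).eval (-1 - δ)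
        - (-1) ^ n * (Polynomial.Chebyshev.T ℝ n).eval (-1 - δ)) := by
  intro n
  induction n with
  | zero =>
    constructor
    · simp [Polynomial.Chebyshev.T_zero]
    · simp [Polynomial.Chebyshev.T_zero, Polynomial.Chebyshev.T_one]
  | succ n ih =>
    obtain ⟨h1, h2⟩ := ih
    have key : (Polynomial.Chebyshev.T ℝ ((n : ℤ) + 2)).eval (-1 - δ)
        = 2 * (-1 - δ) * (Polynomial.Chebyshev.T ℝ ((n : ℤ) + 1)).eval (-1 - δ)
          - (Polynomial.Chebyshev.T ℝ (n : ℤ)).eval (-1 - δ) := by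
      rw [Polynomial.Chebyshev.T_add_two]
      simp [Polynomial.eval_mul, Polynomial.eval_sub]
    have hc1 : ((n : ℝ) + 1) ^ 2 = (n : ℝ) ^ 2 + 2 * n + 1 := by ring
    constructor
    · push_cast
      have : 1 + (n : ℝ) ^ 2 * δ + (2 * (n : ℝ) + 1) * δ
          ≤ (-1) ^ (n + 1) * (Polynomial.Chebyshev.T ℝ (n + 1)).eval (-1 - δ) := by
        linarith
      calc 1 + ((n : ℝ) + 1) ^ 2 * δ = 1 + (n : ℝ) ^ 2 * δ + (2 * (n : ℝ) + 1) * δ := by ring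
        _ ≤ _ := this
    · have hb : 1 + ((n : ℝ) + 1) ^ 2 * δ
          ≤ (-1) ^ (n + 1) * (Polynomial.Chebyshev.T ℝ (n + 1)).eval (-1 - δ) := by
        linarith
      have e2 : (-1 : ℝ) ^ (n + 2) * (Polynomial.Chebyshev.T ℝ ((n : ℤ) + 2)).eval (-1 - δ)
          = 2 * (1 + δ) * ((-1) ^ (n + 1) * (Polynomial.Chebyshev.T ℝ ((n : ℤ) + 1)).eval (-1 - δ))
            - (-1) ^ n * (Polynomial.Chebyshev.T ℝ (n : ℤ)).eval (-1 - δ) := by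
        rw [key]; ring
      push_cast
      rw [show ((n : ℤ) + 1 + 1) = (n : ℤ) + 2 by ring, show n + 1 + 1 = n + 2 from rfl]
      nlinarith [sq_nonneg ((n : ℝ) + 1), mul_pos hδ hδ, h2, hb, e2]

/-- For every natural number `n` and every real `δ > 0`,
`|T_n(-1-δ)| ≥ 1 + n^2 δ`, where `T_n` is the Chebyshev polynomial of the first kind. -/
theorem chebyshev_abs_ge_outside (n : ℕ) (δ : ℝ) (hδ : 0 < δ) :
    1 + (n : ℝ) ^ 2 * δ ≤ |(Polynomial.Chebyshev.T ℝ n).eval (-1 - δ)| := by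
  have h := (cheb_aux δ hδ n).1
  calc 1 + (n : ℝ) ^ 2 * δ ≤ (-1) ^ n * (Polynomial.Chebyshev.T ℝ n).eval (-1 - δ) := h
    _ ≤ |(-1) ^ n * (Polynomial.Chebyshev.T ℝ n).eval (-1 - δ)| := le_abs_self _
    _ = |(Polynomial.Chebyshev.T ℝ n).eval (-1 - δ)| := by
        rw [abs_mul, abs_pow, abs_neg, abs_one, one_pow, one_mul]
end

section
/- Let m ≥ 2 be a perfect square and define C_m(x) = Ĉ_m(x)/Ĉ_m(0) where Ĉ_m(x) = T_{√m}((x-(m+1)/2)/((m-1)/2)). Then C_m(0) = 1 and for every real x with 1 ≤ x ≤ m, |C_m(x)|^2 ≤ 1/9. -/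
open Polynomial


lemma T_eval_neg_cosh (n : ℕ) (t : ℝ) :
    (Polynomial.Chebyshev.T ℝ n).eval (-Real.cosh t) = (-1)^n * Real.cosh (n*t) := by
  have h1 : ((-Real.cosh t : ℝ) : ℂ) = Complex.cos ((Real.pi : ℂ) + t * Complex.I) := by
    rw [Complex.cos_add, Complex.cos_mul_I, Complex.sin_mul_I, Complex.cos_pi, Complex.sin_pi]
    push_cast [Complex.ofReal_cosh]
    ring
  have h2 := Polynomial.Chebyshev.T_complex_cos ((Real.pi : ℂ) + t * Complex.I) n
  have h3 := Polynomial.Chebyshev.complex_ofReal_eval_T (-Real.cosh t) n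
  rw [h1, h2] at h3
  have h4 : Complex.cos (((n:ℤ) : ℂ) * ((Real.pi : ℂ) + t * Complex.I))
      = (((-1:ℝ)^n * Real.cosh (n*t) : ℝ) : ℂ) := by
    push_cast
    rw [mul_add, Complex.cos_add]
    have hc : Complex.cos ((n:ℂ) * (Real.pi:ℂ)) = ((-1:ℝ)^n : ℝ) := by
      have : ((n:ℂ) * (Real.pi:ℂ)) = ((n * Real.pi : ℝ) : ℂ) := by push_cast; ring
      rw [this, ← Complex.ofReal_cos]
      norm_cast
      simpa using Real.cos_nat_mul_pi_sub 0 n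
    have hs : Complex.sin ((n:ℂ) * (Real.pi:ℂ)) = 0 := by
      have : ((n:ℂ) * (Real.pi:ℂ)) = ((n * Real.pi : ℝ) : ℂ) := by push_cast; ring
      rw [this, ← Complex.ofReal_sin, Real.sin_nat_mul_pi]; norm_cast
    have hm : (n:ℂ) * ((t:ℂ) * Complex.I) = ((n*t : ℝ):ℂ) * Complex.I := by push_cast; ring
    rw [hc, hs, hm, Complex.cos_mul_I, ← Complex.ofReal_cosh]
    push_cast
    ring
  rw [h4] at h3
  exact_mod_cast h3

lemma cubic_le (x : ℝ) (hx : 0 ≤ x) (n : ℕ) :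
    1 + n*x + n*((n:ℝ)-1)/2*x^2 + n*((n:ℝ)-1)*((n:ℝ)-2)/6*x^3 ≤ (1+x)^n := by
  induction n with
  | zero => norm_num
  | succ k ih =>
    have hk0 : (0:ℝ) ≤ k := Nat.cast_nonneg k
    have h1 : (0:ℝ) ≤ (k:ℝ)*((k:ℝ)-1) := by
      rcases Nat.eq_zero_or_pos k with h|h
      · simp [h]
      · have : (1:ℝ) ≤ k := by exact_mod_cast h
        nlinarith
    have h2 : (0:ℝ) ≤ (k:ℝ)*((k:ℝ)-1)*((k:ℝ)-2) := by
      rcases Nat.lt_or_ge k 2 with h|h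
      · interval_cases k <;> norm_num
      · have : (2:ℝ) ≤ k := by exact_mod_cast h
        nlinarith
    have hx1 : (0:ℝ) ≤ 1 + x := by linarith
    have hmul := mul_le_mul_of_nonneg_right ih hx1
    have h4 : (0:ℝ) ≤ (k:ℝ)*((k:ℝ)-1)*((k:ℝ)-2)/6 * x^4 :=
      mul_nonneg (by linarith) (by positivity)
    have hp : (1+x)^(k+1) = (1+x)^k*(1+x) := pow_succ _ _
    have hkey : 1 + ((k:ℝ)+1)*x + ((k:ℝ)+1)*(((k:ℝ)+1)-1)/2*x^2 + ((k:ℝ)+1)*(((k:ℝ)+1)-1)*(((k:ℝ)+1)-2)/6*x^3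
        = (1 + (k:ℝ)*x + (k:ℝ)*((k:ℝ)-1)/2*x^2 + (k:ℝ)*((k:ℝ)-1)*((k:ℝ)-2)/6*x^3)*(1+x)
          - (k:ℝ)*((k:ℝ)-1)*((k:ℝ)-2)/6*x^4 := by ring
    push_cast
    rw [hp]
    linarith [hmul, h4, hkey.le]

/-- The key arithmetic bound: for r ≥ 2, a = (r+1)/(r-1), a^r + (a^r)⁻¹ ≥ 6. -/
lemma pow_bound (r : ℕ) (hr2 : 2 ≤ r) :
    6 ≤ (((r:ℝ)+1)/((r:ℝ)-1))^r + ((((r:ℝ)+1)/((r:ℝ)-1))^r)⁻¹ := by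
  set s : ℝ := (r:ℝ) - 1 with hs_def
  have hs1 : (1:ℝ) ≤ s := by
    have : (2:ℝ) ≤ r := by exact_mod_cast hr2
    simp only [hs_def]; linarith
  have hs0 : (0:ℝ) < s := by linarith
  have ha : ((r:ℝ)+1)/((r:ℝ)-1) = 1 + 2/s := by
    rw [hs_def]
    have hne : (r:ℝ) - 1 ≠ 0 := by linarith
    rw [eq_comm, add_div' _ _ _ hne]; congr 1; ring
  have hapos : (0:ℝ) < 1 + 2/s := by positivity
  rcases eq_or_lt_of_le hr2 with h2 | h3
  · -- r = 2
    subst h2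
    norm_num
  · -- r ≥ 3
    have hr3 : 3 ≤ r := h3
    have hs2 : (2:ℝ) ≤ s := by
      have : (3:ℝ) ≤ r := by exact_mod_cast hr3
      simp only [hs_def]; linarith
    have hrs : (r:ℝ) = s + 1 := by simp only [hs_def]; ring
    have hx : (0:ℝ) ≤ 2/s := by positivity
    have hb := cubic_le (2/s) hx r
    have h6 : (6:ℝ) ≤ 1 + r*(2/s) + r*((r:ℝ)-1)/2*(2/s)^2 + r*((r:ℝ)-1)*((r:ℝ)-2)/6*(2/s)^3 := by
      rw [hrs, div_pow, div_pow, ← sub_nonneg]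
      have hid : 1 + (s+1)*(2/s) + (s+1)*(s+1-1)/2*((2:ℝ)^2/s^2) + (s+1)*(s+1-1)*(s+1-2)/6*((2:ℝ)^3/s^3) - 6
          = ((1/3)*s^2 + 4*s - 4/3)/s^2 := by field_simp; ring
      have hnum : (0:ℝ) ≤ (1/3)*s^2 + 4*s - 4/3 := by nlinarith
      rw [hid]
      exact div_nonneg hnum (by positivity)
    have hinv : (0:ℝ) ≤ ((1 + 2/s)^r)⁻¹ := by positivity
    rw [ha]
    calc (6:ℝ) ≤ (1+2/s)^r := le_trans h6 hb
    _ ≤ (1+2/s)^r + ((1+2/s)^r)⁻¹ := by linarith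

/-- Let `m ≥ 2` be a perfect square (`m = r^2`) and define
`C_m(x) = Ĉ_m(x)/Ĉ_m(0)` where `Ĉ_m(x) = T_√m((x-(m+1)/2)/((m-1)/2))`.
Then `C_m(0) = 1` and for every real `x` with `1 ≤ x ≤ m`, `|C_m(x)|^2 ≤ 1/9`. -/
theorem chebyshev_Cm_bound (m r : ℕ) (hm : 2 ≤ m) (hr : r ^ 2 = m)
    (hatC : ℝ → ℝ)
    (hhatC : ∀ x : ℝ, hatC x =
      (Polynomial.Chebyshev.T ℝ r).eval ((x - ((m : ℝ) + 1) / 2) / (((m : ℝ) - 1) / 2)))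
    (C : ℝ → ℝ) (hC : ∀ x : ℝ, C x = hatC x / hatC 0) :
    C 0 = 1 ∧ ∀ x : ℝ, 1 ≤ x → x ≤ (m : ℝ) → |C x| ^ 2 ≤ 1 / 9 := by
  have hr2 : 2 ≤ r := by nlinarith [hr, hm]
  have hmr : (m:ℝ) = (r:ℝ)^2 := by exact_mod_cast hr.symm
  have hrR : (2:ℝ) ≤ (r:ℝ) := by exact_mod_cast hr2
  set a : ℝ := ((r:ℝ)+1)/((r:ℝ)-1) with ha_def
  have hrR' : (2:ℝ) ≤ (r:ℝ) := by exact_mod_cast (by nlinarith [hr, hm] : 2 ≤ r)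
  have hapos : (0:ℝ) < a := by
    rw [ha_def]
    exact div_pos (by linarith) (by linarith)
  have hm1 : (1:ℝ) < m := by
    have : (2:ℝ) ≤ m := by exact_mod_cast hm
    linarith
  have ht0 : Real.cosh (Real.log a) = ((m:ℝ)+1)/((m:ℝ)-1) := by
    rw [Real.cosh_log hapos, ha_def, hmr]
    have h1 : (r:ℝ) - 1 ≠ 0 := by linarith
    have h2 : (r:ℝ) + 1 ≠ 0 := by linarith
    have h3 : (r:ℝ)^2 - 1 ≠ 0 := by nlinarith
    field_simp
    ring
  have harg : ((0:ℝ) - ((m:ℝ)+1)/2)/(((m:ℝ)-1)/2) = -(Real.cosh (Real.log a)) := by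
    rw [ht0]
    have : (m:ℝ) - 1 ≠ 0 := by linarith
    field_simp
    ring
  have h0 : hatC 0 = (-1)^r * Real.cosh (r * Real.log a) := by
    rw [hhatC 0, harg, T_eval_neg_cosh]
  have hcosh : Real.cosh (r * Real.log a) = (a^r + (a^r)⁻¹)/2 := by
    rw [← Real.log_pow, Real.cosh_log (pow_pos hapos r)]
  have h3le : (3:ℝ) ≤ Real.cosh (r*Real.log a) := by
    rw [hcosh]
    have := pow_bound r hr2
    rw [← ha_def] at this
    linarith
  have habs0 : |hatC 0| = Real.cosh (r*Real.log a) := by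
    rw [h0, abs_mul, abs_pow, abs_neg, abs_one, one_pow, one_mul,
      abs_of_pos (lt_of_lt_of_le (by norm_num) h3le)]
  have hne : hatC 0 ≠ 0 := by
    intro h
    rw [h, abs_zero] at habs0
    linarith
  constructor
  · rw [hC 0, div_self hne]
  · intro x hx1 hxm
    have hden : (0:ℝ) < ((m:ℝ)-1)/2 := by linarith
    set y := (x - ((m:ℝ)+1)/2)/(((m:ℝ)-1)/2) with hy
    have hy1 : y ≤ 1 := (div_le_one hden).2 (by linarith)
    have hy2 : -1 ≤ y := by
      rw [neg_le, hy, ← neg_div]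
      exact (div_le_one hden).2 (by linarith)
    have hcos : Real.cos (Real.arccos y) = y := Real.cos_arccos hy2 hy1
    have hval : hatC x = Real.cos (((r:ℤ):ℝ) * Real.arccos y) := by
      have h := Polynomial.Chebyshev.T_real_cos (Real.arccos y) (r:ℤ)
      rw [hcos] at h
      rw [hhatC x, ← hy]
      exact h
    have habsx : |hatC x| ≤ 1 := by rw [hval]; exact Real.abs_cos_le_one _
    have hCx : |C x| ≤ 1/3 := by
      rw [hC, abs_div, habs0]
      exact div_le_div₀ (by norm_num) habsx (by norm_num) h3le
    calc |C x|^2 ≤ (1/3)^2 := pow_le_pow_left₀ (abs_nonneg _) hCx 2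
    _ = 1/9 := by norm_num
end

section
/- Consider a chain of n particles each of dimension d, a vector φ in (ℂ^d)^{⊗n}, and two cuts: between particles i, i+1 and between particles j, j+1. If r_i and r_j are the Schmidt ranks of φ with respect to the two cuts, then d^{-|i-j|} r_j ≤ r_i ≤ d^{|i-j|} r_j. -/
open Module Matrix

/-- finrank of a finite sup is at most the sum of finranks. -/
private lemma finrank_finset_sup_le {ι V : Type*} [AddCommGroup V] [Module ℂ V]
    [FiniteDimensional ℂ V] (s : Finset ι) (p : ι → Submodule ℂ V) :
    finrank ℂ ↥(s.sup p) ≤ ∑ i ∈ s, finrank ℂ ↥(p i) := by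
  classical
  induction s using Finset.induction with
  | empty => simp
  | @insert a s ha ih =>
      rw [Finset.sup_insert, Finset.sum_insert ha]
      exact (Submodule.finrank_add_le_finrank_add_finrank _ _).trans (by gcongr)

private lemma finrank_iSup_le_card_mul {ι V : Type*} [Fintype ι] [AddCommGroup V] [Module ℂ V]
    [FiniteDimensional ℂ V] (p : ι → Submodule ℂ V) {k : ℕ} (hk : ∀ i, finrank ℂ ↥(p i) ≤ k) :
    finrank ℂ ↥(⨆ i, p i) ≤ Fintype.card ι * k := by
  classical
  have h1 : (⨆ i, p i) = Finset.univ.sup p := by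
    rw [Finset.sup_eq_iSup]; simp
  rw [h1]
  calc finrank ℂ ↥(Finset.univ.sup p) ≤ ∑ i, finrank ℂ ↥(p i) := finrank_finset_sup_le _ _
    _ ≤ ∑ _i : ι, k := Finset.sum_le_sum fun i _ => hk i
    _ = Fintype.card ι * k := by simp [Finset.sum_const, mul_comm, Finset.card_univ]

private lemma rank_le_of_cols_mem {X Y : Type*} [Fintype X] [Fintype Y]
    (N : Matrix X Y ℂ) (W : Submodule ℂ (X → ℂ)) (h : ∀ c, Nᵀ c ∈ W) :
    N.rank ≤ finrank ℂ W := by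
  rw [Matrix.rank_eq_finrank_span_cols]
  exact Submodule.finrank_mono (Submodule.span_le.mpr (Set.range_subset_iff.mpr h))

/-- Moving one tensor factor (of size `B`) from the column side to the row side changes
the rank by at most a factor of `card B`. -/
private lemma reshape_rank {A B C : Type*} [Fintype A] [Fintype B] [Fintype C] [DecidableEq B]
    (M : Matrix A (B × C) ℂ) (N : Matrix (A × B) C ℂ) (h : ∀ a b c, N (a, b) c = M a (b, c)) :
    N.rank ≤ Fintype.card B * M.rank ∧ M.rank ≤ Fintype.card B * N.rank := by
  classical
  set L : B → ((A → ℂ) →ₗ[ℂ] (A × B → ℂ)) := fun b =>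
    { toFun := fun v p => if p.2 = b then v p.1 else 0
      map_add' := by intro u v; funext p; by_cases hb : p.2 = b <;> simp [hb]
      map_smul' := by intro r v; funext p; by_cases hb : p.2 = b <;> simp [hb] } with hL
  set R : B → ((A × B → ℂ) →ₗ[ℂ] (A → ℂ)) := fun b => LinearMap.funLeft ℂ ℂ (fun a => (a, b))
    with hR
  constructor
  · have h1 : ∀ c, Nᵀ c ∈ ⨆ b, Submodule.map (L b) (Submodule.span ℂ (Set.range Mᵀ)) := by
      intro c
      have hcol : Nᵀ c = ∑ b, L b (Mᵀ (b, c)) := by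
        funext p
        rw [Finset.sum_apply]
        simp only [hL, LinearMap.coe_mk, AddHom.coe_mk, Matrix.transpose_apply]
        rw [Finset.sum_ite_eq (Finset.univ) p.2 (fun b => M p.1 (b, c))]
        simp [h p.1 p.2 c]
      rw [hcol]
      exact Submodule.sum_mem _ fun b _ =>
        Submodule.mem_iSup_of_mem b (Submodule.mem_map_of_mem (Submodule.subset_span ⟨(b, c), rfl⟩))
    refine (rank_le_of_cols_mem N _ h1).trans (finrank_iSup_le_card_mul _ fun b => ?_)
    calc finrank ℂ ↥(Submodule.map (L b) (Submodule.span ℂ (Set.range Mᵀ)))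
        ≤ finrank ℂ ↥(Submodule.span ℂ (Set.range Mᵀ)) := Submodule.finrank_map_le _ _
      _ = M.rank := (Matrix.rank_eq_finrank_span_cols M).symm
  · have h1 : ∀ bc : B × C, Mᵀ bc ∈ ⨆ b, Submodule.map (R b) (Submodule.span ℂ (Set.range Nᵀ)) := by
      rintro ⟨b, c⟩
      have hcol : Mᵀ (b, c) = R b (Nᵀ c) := by
        funext a
        simp [hR, LinearMap.funLeft, h a b c]
      rw [hcol]
      exact Submodule.mem_iSup_of_mem b (Submodule.mem_map_of_mem (Submodule.subset_span ⟨c, rfl⟩))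
    refine (rank_le_of_cols_mem M _ h1).trans (finrank_iSup_le_card_mul _ fun b => ?_)
    calc finrank ℂ ↥(Submodule.map (R b) (Submodule.span ℂ (Set.range Nᵀ)))
        ≤ finrank ℂ ↥(Submodule.span ℂ (Set.range Nᵀ)) := Submodule.finrank_map_le _ _
      _ = N.rank := (Matrix.rank_eq_finrank_span_cols N).symm
private lemma rank_reindex' {k l m' n' : Type*} [Fintype l] [Fintype n']
    (e₁ : k ≃ m') (e₂ : l ≃ n') (A : Matrix k l ℂ) :
    (Matrix.reindex e₁ e₂ A).rank = A.rank := by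
  rw [Matrix.rank, Matrix.rank, Matrix.mulVecLin_reindex, LinearMap.range_comp,
    LinearMap.range_comp, LinearEquiv.range, Submodule.map_top, LinearEquiv.finrank_map_eq]

private lemma rank_submatrix' {k l m' n' : Type*} [Fintype l] [Fintype n']
    (A : Matrix k l ℂ) (e : m' ≃ k) (f : n' ≃ l) :
    (A.submatrix e f).rank = A.rank := by
  simpa using rank_reindex' e.symm f.symm A

/-- The state space of `n` particles of local dimension `d`, `(ℂ^d)^{⊗n}`. -/
def NState (n d : ℕ) : Type := (Fin n → Fin d) → ℂ

/-- Merge a configuration on a subset `S` with one on its complement. -/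
def mergeCfg {n d : ℕ} (S : Finset (Fin n)) (f : {i // i ∈ S} → Fin d)
    (g : {i // i ∉ S} → Fin d) : Fin n → Fin d :=
  fun i => if h : i ∈ S then f ⟨i, h⟩ else g ⟨i, h⟩

/-- The Schmidt rank of a state with respect to the bipartition `(S, Sᶜ)`. -/
noncomputable def SR {n d : ℕ} (S : Finset (Fin n)) (φ : NState n d) : ℕ :=
  (Matrix.of fun f g => φ (mergeCfg S f g)).rank

/-- The cut between particles `i` and `i+1` of a 1D chain: the first `i` particles. -/
def cutSet (n i : ℕ) : Finset (Fin n) := Finset.univ.filter fun t => (t : ℕ) < i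

private def eRowIns {n d : ℕ} (S : Finset (Fin n)) (a : Fin n) (ha : a ∉ S) :
    ({t : Fin n // t ∈ insert a S} → Fin d) ≃ (({t : Fin n // t ∈ S} → Fin d) × Fin d) where
  toFun f := (fun t => f ⟨t.1, Finset.mem_insert_of_mem t.2⟩, f ⟨a, Finset.mem_insert_self a S⟩)
  invFun p t := if h : t.1 ∈ S then p.1 ⟨t.1, h⟩ else p.2
  left_inv f := by
    funext t
    dsimp only
    split_ifs with h
    · rfl
    · have hta : t.1 = a := by
        rcases Finset.mem_insert.mp t.2 with h' | h'
        · exact h'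
        · exact absurd h' h
      congr 1
      exact Subtype.ext hta.symm
  right_inv p := by
    refine Prod.ext ?_ ?_
    · funext t
      dsimp only
      rw [dif_pos t.2]
    · dsimp only
      rw [dif_neg ha]

private def eColIns {n d : ℕ} (S : Finset (Fin n)) (a : Fin n) (ha : a ∉ S) :
    ({t : Fin n // t ∉ S} → Fin d) ≃ (Fin d × ({t : Fin n // t ∉ insert a S} → Fin d)) where
  toFun g := (g ⟨a, ha⟩, fun t => g ⟨t.1, fun h => t.2 (Finset.mem_insert_of_mem h)⟩)
  invFun p t := if h : t.1 = a then p.1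
    else p.2 ⟨t.1, fun hmem => ((Finset.mem_insert.mp hmem).elim h t.2)⟩
  left_inv g := by
    funext t
    dsimp only
    split_ifs with h
    · congr 1
      exact Subtype.ext h.symm
    · rfl
  right_inv p := by
    refine Prod.ext ?_ ?_
    · dsimp only
      rw [dif_pos rfl]
    · funext t
      dsimp only
      rw [dif_neg (fun (h : t.1 = a) => t.2 (by rw [h]; exact Finset.mem_insert_self a S))]

private lemma merge_insert {n d : ℕ} (S : Finset (Fin n)) (a : Fin n) (ha : a ∉ S)
    (f : {t : Fin n // t ∈ insert a S} → Fin d) (g : {t : Fin n // t ∉ insert a S} → Fin d) :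
    mergeCfg (insert a S) f g =
      mergeCfg S ((eRowIns S a ha f).1) ((eColIns S a ha).symm ((eRowIns S a ha f).2, g)) := by
  funext x
  by_cases hx : x ∈ S
  · have hx' : x ∈ insert a S := Finset.mem_insert_of_mem hx
    simp only [mergeCfg, dif_pos hx, dif_pos hx']
    rfl
  · by_cases hxa : x = a
    · subst hxa
      simp only [mergeCfg, dif_pos (Finset.mem_insert_self x S), dif_neg hx]
      simp only [eColIns, Equiv.coe_fn_symm_mk, dif_pos]
      rfl
    · have hx' : x ∉ insert a S := fun h => (Finset.mem_insert.mp h).elim hxa hx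
      simp only [mergeCfg, dif_neg hx, dif_neg hx']
      simp only [eColIns, Equiv.coe_fn_symm_mk, dif_neg hxa]

private lemma SR_insert {n d : ℕ} (φ : NState n d) (S : Finset (Fin n)) (a : Fin n) (ha : a ∉ S) :
    SR (insert a S) φ ≤ d * SR S φ ∧ SR S φ ≤ d * SR (insert a S) φ := by
  classical
  set M : Matrix ({t : Fin n // t ∈ S} → Fin d) ({t : Fin n // t ∉ S} → Fin d) ℂ :=
    Matrix.of fun f g => φ (mergeCfg S f g) with hM
  set Mc : Matrix ({t : Fin n // t ∈ S} → Fin d)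
      (Fin d × ({t : Fin n // t ∉ insert a S} → Fin d)) ℂ :=
    M.submatrix id (eColIns S a ha).symm with hMc
  set N : Matrix (({t : Fin n // t ∈ S} → Fin d) × Fin d)
      ({t : Fin n // t ∉ insert a S} → Fin d) ℂ :=
    fun p c => Mc p.1 (p.2, c) with hN
  have hMrank : Mc.rank = M.rank := by
    rw [hMc, show (id : ({t : Fin n // t ∈ S} → Fin d) → _) = ⇑(Equiv.refl _) from rfl]
    exact rank_submatrix' M (Equiv.refl _) (eColIns S a ha).symm
  have hNM : (Matrix.of fun f g => φ (mergeCfg (insert a S) f g)) =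
      N.submatrix (eRowIns S a ha) (Equiv.refl _) := by
    ext f g
    simp only [Matrix.of_apply, Matrix.submatrix_apply, Equiv.refl_apply, hN, hMc,
      Matrix.submatrix_apply, id_eq, hM, Matrix.of_apply]
    rw [merge_insert S a ha f g]
    rfl
  have hNrank : SR (insert a S) φ = N.rank := by
    rw [SR, hNM]
    exact rank_submatrix' N (eRowIns S a ha) (Equiv.refl _)
  have key := reshape_rank Mc N (fun a b c => rfl)
  rw [Fintype.card_fin, hMrank] at key
  have hSR : SR S φ = M.rank := rfl
  exact ⟨by rw [hNrank, hSR]; exact key.1, by rw [hNrank, hSR]; exact key.2⟩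
private lemma cutSet_succ {n : ℕ} (k : ℕ) (hk : k < n) :
    cutSet n (k + 1) = insert (⟨k, hk⟩ : Fin n) (cutSet n k) := by
  ext t
  simp only [cutSet, Finset.mem_filter, Finset.mem_univ, true_and, Finset.mem_insert,
    Fin.ext_iff]
  omega

private lemma SR_chain {n d : ℕ} (φ : NState n d) (i : ℕ) :
    ∀ j, i ≤ j → j ≤ n → SR (cutSet n j) φ ≤ d ^ (j - i) * SR (cutSet n i) φ ∧
      SR (cutSet n i) φ ≤ d ^ (j - i) * SR (cutSet n j) φ := by
  intro j
  induction j with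
  | zero =>
      intro hij _
      have h0 : i = 0 := Nat.le_zero.mp hij
      subst h0
      simp
  | succ k ih =>
      intro hik hkn
      by_cases h : i ≤ k
      · have hk : k < n := hkn
        obtain ⟨h1, h2⟩ := ih h hk.le
        have step := SR_insert φ (cutSet n k) ⟨k, hk⟩ (by simp [cutSet])
        rw [← cutSet_succ k hk] at step
        have hpow : k + 1 - i = (k - i) + 1 := by omega
        rw [hpow, pow_succ]
        constructor
        · calc SR (cutSet n (k + 1)) φ ≤ d * SR (cutSet n k) φ := step.1
            _ ≤ d * (d ^ (k - i) * SR (cutSet n i) φ) := Nat.mul_le_mul_left _ h1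
            _ = d ^ (k - i) * d * SR (cutSet n i) φ := by ring
        · calc SR (cutSet n i) φ ≤ d ^ (k - i) * SR (cutSet n k) φ := h2
            _ ≤ d ^ (k - i) * (d * SR (cutSet n (k + 1)) φ) := Nat.mul_le_mul_left _ step.2
            _ = d ^ (k - i) * d * SR (cutSet n (k + 1)) φ := by ring
      · have hik' : i = k + 1 := by omega
        subst hik'
        simp

/-- For a state `φ` of a chain of `n` particles of dimension `d`, the Schmidt
ranks `r_i`, `r_j` with respect to the cuts `(i, i+1)` and `(j, j+1)` satisfy
`d^{-|i-j|} r_j ≤ r_i ≤ d^{|i-j|} r_j`. -/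
theorem SR_nearby_cuts {n d : ℕ} (φ : NState n d) (i j : ℕ) (hi : i ≤ n) (hj : j ≤ n) :
    SR (cutSet n j) φ ≤ d ^ ((i : ℤ) - j).natAbs * SR (cutSet n i) φ ∧
    SR (cutSet n i) φ ≤ d ^ ((i : ℤ) - j).natAbs * SR (cutSet n j) φ := by
  rcases le_total i j with hij | hij
  · have habs : ((i : ℤ) - j).natAbs = j - i := by omega
    have := SR_chain φ i j hij hj
    rw [habs]
    exact ⟨this.1, this.2⟩
  · have habs : ((i : ℤ) - j).natAbs = i - j := by omega
    have := SR_chain φ j i hij hi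
    rw [habs]
    exact ⟨this.2, this.1⟩
end

section
/- Suppose K is a (D,Δ)-approximate ground-space projection (AGSP) with D·Δ ≤ 1/2 for a Hamiltonian with unique ground state Ω on a bipartite Hilbert space H_L ⊗ H_R. Then there exists a product state φ = L ⊗ R with |⟨Ω, φ⟩| ≥ 1/√(2D). -/
/-- The inner product on the bipartite space `H_L ⊗ H_R ≅ Matrix (Fin a) (Fin b) ℂ`. -/
noncomputable def mInner {a b : ℕ} (M N : Matrix (Fin a) (Fin b) ℂ) : ℂ :=
  ∑ i, ∑ j, star (M i j) * N i j

/-- Squared norm. -/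
noncomputable def mNormSq {a b : ℕ} (M : Matrix (Fin a) (Fin b) ℂ) : ℝ :=
  (mInner M M).re

namespace AGSPAux

variable {a b : ℕ}

/-! ### Euclidean space embedding -/

def toE (M : Matrix (Fin a) (Fin b) ℂ) : EuclideanSpace ℂ (Fin a × Fin b) := WithLp.toLp 2 (fun p : Fin a × Fin b => M p.1 p.2)

lemma mInner_toE (M N : Matrix (Fin a) (Fin b) ℂ) : mInner M N = inner ℂ (toE M) (toE N) := by
  simp [mInner, toE, PiLp.inner_apply, RCLike.inner_apply', Fintype.sum_prod_type]
  exact Finset.sum_congr rfl fun _ _ => Finset.sum_congr rfl fun _ _ => mul_comm _ _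

lemma mNormSq_toE (M : Matrix (Fin a) (Fin b) ℂ) : mNormSq M = ‖toE M‖^2 := by
  rw [mNormSq, mInner_toE]
  exact_mod_cast inner_self_eq_norm_sq (𝕜 := ℂ) (toE M)

lemma toE_add (M N : Matrix (Fin a) (Fin b) ℂ) : toE (M + N) = toE M + toE N := rfl
lemma toE_smul (c : ℂ) (M : Matrix (Fin a) (Fin b) ℂ) : toE (c • M) = c • toE M := rfl
lemma toE_sub (M N : Matrix (Fin a) (Fin b) ℂ) : toE (M - N) = toE M - toE N := rfl

/-! ### The conjugate-transpose action and operator-norm bound -/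

noncomputable def Tst (Ω : Matrix (Fin a) (Fin b) ℂ) (u : EuclideanSpace ℂ (Fin a)) :
    EuclideanSpace ℂ (Fin b) := WithLp.toLp 2 (fun j => ∑ i, star (Ω i j) * u i)

lemma Tst_apply (Ω : Matrix (Fin a) (Fin b) ℂ) (u : EuclideanSpace ℂ (Fin a)) (j : Fin b) :
    Tst Ω u j = ∑ i, star (Ω i j) * u i := rfl

lemma Tst_smul (Ω : Matrix (Fin a) (Fin b) ℂ) (c : ℂ) (u : EuclideanSpace ℂ (Fin a)) :
    Tst Ω (c • u) = c • Tst Ω u := by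
  ext j
  simp only [Tst, PiLp.toLp_apply, PiLp.smul_apply, smul_eq_mul, Finset.mul_sum]
  exact Finset.sum_congr rfl fun i _ => by ring

noncomputable def svec (w : EuclideanSpace ℂ (Fin b)) : EuclideanSpace ℂ (Fin b) :=
  WithLp.toLp 2 (fun j => starRingEnd ℂ (w j))

lemma svec_apply (w : EuclideanSpace ℂ (Fin b)) (j : Fin b) : svec w j = starRingEnd ℂ (w j) := rfl

lemma norm_svec (w : EuclideanSpace ℂ (Fin b)) : ‖svec w‖ = ‖w‖ := by
  simp only [EuclideanSpace.norm_eq, svec_apply]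
  simp

lemma sum_mul_conj (w : EuclideanSpace ℂ (Fin b)) :
    ∑ j, w j * starRingEnd ℂ (w j) = (‖w‖ ^ 2 : ℝ) := by
  have : (inner ℂ w w : ℂ) = (‖w‖ : ℂ) ^ 2 := inner_self_eq_norm_sq_to_K w
  rw [PiLp.inner_apply] at this
  simp only [RCLike.inner_apply'] at this
  push_cast
  rw [← this]
  exact Finset.sum_congr rfl fun j _ => by ring

lemma opnorm (Ω : Matrix (Fin a) (Fin b) ℂ) (μ : ℝ) (hμ : 0 ≤ μ)
    (hmax : ∀ u : EuclideanSpace ℂ (Fin a), ∀ v : EuclideanSpace ℂ (Fin b), ‖u‖ = 1 → ‖v‖ = 1 →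
      ‖∑ i, ∑ j, star (Ω i j) * (u i * v j)‖ ≤ μ) :
    ∀ u : EuclideanSpace ℂ (Fin a), ‖Tst Ω u‖ ≤ μ * ‖u‖ := by
  have unit : ∀ u : EuclideanSpace ℂ (Fin a), ‖u‖ = 1 → ‖Tst Ω u‖ ≤ μ := by
    intro u hu
    set w := Tst Ω u with hw
    by_cases hw0 : w = 0
    · rw [hw0]; simpa using hμ
    · have hnw : ‖w‖ ≠ 0 := norm_ne_zero_iff.2 hw0
      set v : EuclideanSpace ℂ (Fin b) := (↑‖w‖ : ℂ)⁻¹ • svec w with hv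
      have hv1 : ‖v‖ = 1 := by
        rw [hv, norm_smul, norm_svec w]
        simp [hnw]
      have key : (∑ i, ∑ j, star (Ω i j) * (u i * v j)) = (‖w‖ : ℂ) := by
        rw [Finset.sum_comm]
        have h1 : ∀ j, ∑ i, star (Ω i j) * (u i * v j) = w j * v j := by
          intro j
          show ∑ i, star (Ω i j) * (u i * v j) = (∑ i, star (Ω i j) * u i) * v j
          rw [Finset.sum_mul]
          exact Finset.sum_congr rfl fun i _ => by ring
        rw [Finset.sum_congr rfl fun j _ => h1 j]
        have h2 : ∑ j, w j * v j = (↑‖w‖ : ℂ)⁻¹ * ∑ j, w j * starRingEnd ℂ (w j) := by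
          rw [Finset.mul_sum]
          refine Finset.sum_congr rfl fun j _ => ?_
          have hvj : v j = (↑‖w‖ : ℂ)⁻¹ * starRingEnd ℂ (w j) := by
            rw [hv, PiLp.smul_apply, svec_apply, smul_eq_mul]
          rw [hvj]; ring
        rw [h2, sum_mul_conj]
        have hc : (‖w‖ : ℂ) ≠ 0 := by exact_mod_cast hnw
        push_cast
        field_simp
      have := hmax u v hu hv1
      rw [key] at this
      simpa [Complex.norm_of_nonneg (norm_nonneg w)] using this
  intro u
  by_cases hu0 : u = 0
  · subst hu0
    have : Tst Ω (0 : EuclideanSpace ℂ (Fin a)) = 0 := by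
      ext j; simp [Tst]
    simp [this]
  · have hnu : ‖u‖ ≠ 0 := norm_ne_zero_iff.2 hu0
    have h1 : ‖(↑‖u‖⁻¹ : ℂ) • u‖ = 1 := by
      rw [norm_smul]; simp [hnu]
    have h2 := unit _ h1
    rw [Tst_smul, norm_smul] at h2
    simp only [norm_inv, Complex.norm_real, norm_norm] at h2
    calc ‖Tst Ω u‖ = ‖u‖ * (‖u‖⁻¹ * ‖Tst Ω u‖) := by field_simp
    _ ≤ ‖u‖ * μ := mul_le_mul_of_nonneg_left h2 (norm_nonneg u)
    _ = μ * ‖u‖ := mul_comm _ _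

/-! ### Rank bound -/

noncomputable def ecol (N : Matrix (Fin a) (Fin b) ℂ) (j : Fin b) : EuclideanSpace ℂ (Fin a) :=
  WithLp.toLp 2 (fun i => N i j)

lemma ecol_apply (N : Matrix (Fin a) (Fin b) ℂ) (j : Fin b) (i : Fin a) : ecol N j i = N i j := rfl

lemma enorm_sq {n : ℕ} (x : EuclideanSpace ℂ (Fin n)) : ‖x‖^2 = ∑ j, ‖x j‖^2 := by
  rw [EuclideanSpace.norm_eq, Real.sq_sqrt (by positivity)]

lemma exp_lemma (W : Submodule ℂ (EuclideanSpace ℂ (Fin a))) (x : EuclideanSpace ℂ (Fin a))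
    (hx : x ∈ W) (k : Fin a) :
    x k = ∑ i, (inner ℂ ((stdOrthonormalBasis ℂ W i : EuclideanSpace ℂ (Fin a))) x : ℂ) *
      (stdOrthonormalBasis ℂ W i : EuclideanSpace ℂ (Fin a)) k := by
  set bW := stdOrthonormalBasis ℂ W
  have h2 : ((∑ i, bW.repr ⟨x,hx⟩ i • bW i : W) : EuclideanSpace ℂ (Fin a)) = x := by
    rw [bW.sum_repr ⟨x, hx⟩]
  conv_lhs => rw [← h2, AddSubmonoidClass.coe_finset_sum, WithLp.ofLp_sum, Finset.sum_apply]
  refine Finset.sum_congr rfl fun i _ => ?_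
  rw [bW.repr_apply_apply]
  rfl

lemma numeric (D : ℕ) (Δ μ S : ℝ) (hD : 1 ≤ D) (hΔ : 0 ≤ Δ) (hDΔ : (D : ℝ) * Δ ≤ 1 / 2)
    (hμpos : 0 < μ) (hSnn : 0 ≤ S) (hSle : S ≤ μ^2 + Δ)
    (hkey2 : μ ≤ μ * Real.sqrt D * Real.sqrt S) : 1 / (2 * (D:ℝ)) ≤ μ^2 := by
  have hDpos : (0:ℝ) < D := by exact_mod_cast hD
  have h3 : 1 ≤ Real.sqrt D * Real.sqrt S := by
    by_contra hcon
    push_neg at hcon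
    have := mul_lt_mul_of_pos_left hcon hμpos
    rw [mul_one] at this
    rw [mul_assoc] at hkey2
    linarith
  have h4 : (1:ℝ) ≤ D * S := by
    have h := mul_le_mul h3 h3 (by norm_num) (by positivity)
    calc (1:ℝ) = 1 * 1 := by norm_num
      _ ≤ (Real.sqrt D * Real.sqrt S) * (Real.sqrt D * Real.sqrt S) := h
      _ = (Real.sqrt D * Real.sqrt D) * (Real.sqrt S * Real.sqrt S) := by ring
      _ = D * S := by
          rw [Real.mul_self_sqrt (by positivity), Real.mul_self_sqrt hSnn]
  have h5 : (1:ℝ) ≤ D * (μ^2 + Δ) :=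
    h4.trans (mul_le_mul_of_nonneg_left hSle (by positivity))
  have h6 : (1:ℝ)/2 ≤ D * μ^2 := by nlinarith
  rw [div_le_iff₀ (by positivity)]
  nlinarith

lemma mNormSq_nonneg (M : Matrix (Fin a) (Fin b) ℂ) : 0 ≤ mNormSq M := by
  rw [mNormSq_toE]; positivity

lemma mNormSq_eq (N : Matrix (Fin a) (Fin b) ℂ) :
    mNormSq N = ∑ k, ∑ j, ‖N k j‖^2 := by
  unfold mNormSq mInner
  rw [Complex.re_sum]
  refine Finset.sum_congr rfl fun k _ => ?_
  rw [Complex.re_sum]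
  refine Finset.sum_congr rfl fun j _ => ?_
  rw [← Complex.normSq_eq_norm_sq]
  rw [show (star (N k j)) = (starRingEnd ℂ) (N k j) from rfl, ← Complex.normSq_eq_conj_mul_self]
  simp

lemma rank_bound (Ω N : Matrix (Fin a) (Fin b) ℂ) (μ : ℝ) (hμ : 0 ≤ μ)
    (hop : ∀ u : EuclideanSpace ℂ (Fin a), ‖Tst Ω u‖ ≤ μ * ‖u‖)
    (r : ℕ) (hrank : N.rank ≤ r) :
    ‖mInner Ω N‖ ≤ μ * Real.sqrt r * Real.sqrt (mNormSq N) := by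
  classical
  set e := (WithLp.linearEquiv 2 ℂ (∀ _ : Fin a, ℂ)).symm with he
  set W : Submodule ℂ (EuclideanSpace ℂ (Fin a)) :=
    Submodule.map (e : (∀ _ : Fin a, ℂ) →ₗ[ℂ] EuclideanSpace ℂ (Fin a))
      (LinearMap.range N.mulVecLin) with hW
  have hfr : Module.finrank ℂ W = N.rank := by
    rw [hW, LinearEquiv.finrank_map_eq e _, Matrix.rank]
  set r' := Module.finrank ℂ W with hr'
  set bW := stdOrthonormalBasis ℂ W with hbW
  set u : Fin r' → EuclideanSpace ℂ (Fin a) := fun i => (bW i : EuclideanSpace ℂ (Fin a)) with hu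
  have hON : Orthonormal ℂ u := bW.orthonormal.comp_linearIsometry W.subtypeₗᵢ
  have hcol : ∀ j, ecol N j ∈ W := by
    intro j
    refine ⟨N.mulVec (Pi.single j 1), ⟨Pi.single j 1, rfl⟩, ?_⟩
    show e (N.mulVec (Pi.single j 1)) = ecol N j
    ext i
    show N.mulVec (Pi.single j 1) i = N i j
    rw [Matrix.mulVec_single]
    exact mul_one _
  set c : Fin r' → Fin b → ℂ := fun i j => (inner ℂ (u i) (ecol N j) : ℂ) with hc
  have hconj : ∀ i j, (starRingEnd ℂ) (Tst N (u i) j) = c i j := by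
    intro i j
    show _ = (inner ℂ (u i) (ecol N j) : ℂ)
    rw [PiLp.inner_apply, Tst_apply, map_sum]
    refine Finset.sum_congr rfl fun k _ => ?_
    simp only [map_mul, RCLike.inner_apply', ecol_apply, RCLike.star_def, Complex.conj_conj]
    ring
  have hmain : mInner Ω N = ∑ i, (inner ℂ (Tst N (u i)) (Tst Ω (u i)) : ℂ) := by
    have hL : mInner Ω N = ∑ k, ∑ j, ∑ i, c i j * (star (Ω k j) * u i k) := by
      unfold mInner
      refine Finset.sum_congr rfl fun k _ => Finset.sum_congr rfl fun j _ => ?_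
      simp only [hc, hu, hbW]
      rw [show N k j = ecol N j k from rfl, exp_lemma W (ecol N j) (hcol j) k, Finset.mul_sum]
      exact Finset.sum_congr rfl fun i _ => by ring
    have hR : ∀ i, (inner ℂ (Tst N (u i)) (Tst Ω (u i)) : ℂ)
        = ∑ j, ∑ k, c i j * (star (Ω k j) * u i k) := by
      intro i
      rw [PiLp.inner_apply]
      refine Finset.sum_congr rfl fun j _ => ?_
      rw [RCLike.inner_apply', hconj, Tst_apply, Finset.mul_sum]
    have hswap : ∑ k, ∑ j, ∑ i, c i j * (star (Ω k j) * u i k)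
        = ∑ i, ∑ j, ∑ k, c i j * (star (Ω k j) * u i k) := by
      calc ∑ k, ∑ j, ∑ i, c i j * (star (Ω k j) * u i k)
          = ∑ j, ∑ k, ∑ i, c i j * (star (Ω k j) * u i k) := Finset.sum_comm
        _ = ∑ j, ∑ i, ∑ k, c i j * (star (Ω k j) * u i k) :=
            Finset.sum_congr rfl fun j _ => Finset.sum_comm
        _ = ∑ i, ∑ j, ∑ k, c i j * (star (Ω k j) * u i k) := Finset.sum_comm
    rw [hL, hswap]
    exact Finset.sum_congr rfl fun i _ => (hR i).symm
  have hNSnonneg : 0 ≤ mNormSq N := mNormSq_nonneg N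
  have hTstsq : ∀ i, ‖Tst N (u i)‖^2 = ∑ j, ‖c i j‖^2 := by
    intro i
    rw [enorm_sq]
    refine Finset.sum_congr rfl fun j _ => ?_
    rw [← hconj i j, Complex.norm_conj]
  have hbessel : ∑ i, ‖Tst N (u i)‖^2 ≤ mNormSq N := by
    rw [mNormSq_eq]
    calc ∑ i, ‖Tst N (u i)‖^2 = ∑ i, ∑ j, ‖c i j‖^2 :=
        Finset.sum_congr rfl fun i _ => hTstsq i
      _ = ∑ j, ∑ i, ‖c i j‖^2 := Finset.sum_comm
      _ ≤ ∑ j, ‖ecol N j‖^2 := by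
          refine Finset.sum_le_sum fun j _ => ?_
          have := hON.sum_inner_products_le (s := Finset.univ) (ecol N j)
          simpa [hc] using this
      _ = ∑ j, ∑ k, ‖N k j‖^2 := by
          refine Finset.sum_congr rfl fun j _ => ?_
          rw [enorm_sq]
          rfl
      _ = ∑ k, ∑ j, ‖N k j‖^2 := Finset.sum_comm
  have habs : ‖mInner Ω N‖ ≤ μ * ∑ i, ‖Tst N (u i)‖ := by
    rw [hmain]
    calc ‖∑ i, (inner ℂ (Tst N (u i)) (Tst Ω (u i)) : ℂ)‖
        ≤ ∑ i, ‖(inner ℂ (Tst N (u i)) (Tst Ω (u i)) : ℂ)‖ :=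
          norm_sum_le _ _
      _ ≤ ∑ i, ‖Tst N (u i)‖ * ‖Tst Ω (u i)‖ := by
          refine Finset.sum_le_sum fun i _ => ?_
          exact norm_inner_le_norm _ _
      _ ≤ ∑ i, ‖Tst N (u i)‖ * μ := by
          refine Finset.sum_le_sum fun i _ => ?_
          refine mul_le_mul_of_nonneg_left ?_ (norm_nonneg _)
          have := hop (u i)
          rwa [hON.1 i, mul_one] at this
      _ = μ * ∑ i, ‖Tst N (u i)‖ := by rw [← Finset.sum_mul, mul_comm]
  have hsum : ∑ i, ‖Tst N (u i)‖ ≤ Real.sqrt r * Real.sqrt (mNormSq N) := by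
    have h1 : (∑ i, ‖Tst N (u i)‖)^2 ≤ (r' : ℝ) * ∑ i, ‖Tst N (u i)‖^2 := by
      simpa using sq_sum_le_card_mul_sum_sq
        (s := Finset.univ) (f := fun i => ‖Tst N (u i)‖)
    have hr'le : (r' : ℝ) ≤ (r : ℝ) := by exact_mod_cast hfr ▸ hrank
    have h2 : (∑ i, ‖Tst N (u i)‖)^2 ≤ (r : ℝ) * mNormSq N := by
      refine h1.trans (mul_le_mul hr'le hbessel ?_ (by positivity))
      positivity
    have h3 : ∑ i, ‖Tst N (u i)‖ ≤ Real.sqrt ((r:ℝ) * mNormSq N) := by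
      rw [← Real.sqrt_sq (Finset.sum_nonneg fun i _ => norm_nonneg _)]
      exact Real.sqrt_le_sqrt h2
    rwa [Real.sqrt_mul (by positivity)] at h3
  calc ‖mInner Ω N‖ ≤ μ * ∑ i, ‖Tst N (u i)‖ := habs
    _ ≤ μ * (Real.sqrt r * Real.sqrt (mNormSq N)) := mul_le_mul_of_nonneg_left hsum hμ
    _ = μ * Real.sqrt r * Real.sqrt (mNormSq N) := (mul_assoc _ _ _).symm

/-! ### Maximizer -/

noncomputable def f (Ω : Matrix (Fin a) (Fin b) ℂ)
    (p : EuclideanSpace ℂ (Fin a) × EuclideanSpace ℂ (Fin b)) : ℝ :=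
  ‖∑ i, ∑ j, star (Ω i j) * (p.1 i * p.2 j)‖

lemma f_cont (Ω : Matrix (Fin a) (Fin b) ℂ) : Continuous (f Ω) := by
  apply continuous_norm.comp
  apply continuous_finset_sum; intro i _
  apply continuous_finset_sum; intro j _
  exact continuous_const.mul ((((PiLp.continuous_apply 2 _ i).comp continuous_fst)).mul
    (((PiLp.continuous_apply 2 _ j).comp continuous_snd)))

lemma exists_max (Ω : Matrix (Fin a) (Fin b) ℂ) (ha : 0 < a) (hb : 0 < b) :
    ∃ p ∈ (Metric.sphere (0 : EuclideanSpace ℂ (Fin a)) 1) ×ˢ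
        (Metric.sphere (0 : EuclideanSpace ℂ (Fin b)) 1),
      ∀ q ∈ (Metric.sphere (0 : EuclideanSpace ℂ (Fin a)) 1) ×ˢ
        (Metric.sphere (0 : EuclideanSpace ℂ (Fin b)) 1), f Ω q ≤ f Ω p := by
  obtain ⟨p, hp, hmax⟩ := IsCompact.exists_isMaxOn
    ((isCompact_sphere (0 : EuclideanSpace ℂ (Fin a)) 1).prod
      (isCompact_sphere (0 : EuclideanSpace ℂ (Fin b)) 1))
    (Set.Nonempty.prod ⟨EuclideanSpace.single ⟨0, ha⟩ 1, by simp [EuclideanSpace.norm_single]⟩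
      ⟨EuclideanSpace.single ⟨0, hb⟩ 1, by simp [EuclideanSpace.norm_single]⟩)
    (f_cont Ω).continuousOn
  exact ⟨p, hp, fun q hq => hmax hq⟩

lemma rank_vmv_le_one (L : Fin a → ℂ) (R : Fin b → ℂ) :
    (Matrix.vecMulVec L R).rank ≤ 1 := by
  classical
  by_cases hL : L = 0
  · have : Matrix.vecMulVec L R = 0 := by
      subst hL; ext i j; simp [Matrix.vecMulVec_apply]
    rw [this, Matrix.rank_zero]
    omega
  · have hle : LinearMap.range (Matrix.vecMulVec L R).mulVecLin ≤ Submodule.span ℂ {L} := by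
      rintro y ⟨x, rfl⟩
      have : (Matrix.vecMulVec L R).mulVecLin x = (∑ j, R j * x j) • L := by
        funext i
        simp only [Matrix.mulVecLin_apply, Matrix.mulVec, Matrix.vecMulVec_apply,
          dotProduct, Pi.smul_apply, smul_eq_mul, Finset.sum_mul]
        exact Finset.sum_congr rfl fun j _ => by ring
      rw [this]
      exact Submodule.smul_mem _ _ (Submodule.mem_span_singleton_self L)
    calc (Matrix.vecMulVec L R).rank
        ≤ Module.finrank ℂ (Submodule.span ℂ ({L} : Set (Fin a → ℂ))) :=
          Submodule.finrank_mono hle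
      _ = 1 := finrank_span_singleton hL

/-- Pythagoras: `‖c•Ω + x‖² = |c|² + ‖x‖²` when `x ⟂ Ω` and `‖Ω‖ = 1`. -/
lemma pyth (Ω x : Matrix (Fin a) (Fin b) ℂ) (c : ℂ) (h : mInner Ω x = 0)
    (hΩ : mInner Ω Ω = 1) :
    mNormSq (c • Ω + x) = ‖c‖ ^ 2 + mNormSq x := by
  have hΩn : ‖toE Ω‖^2 = 1 := by
    have := mNormSq_toE Ω
    rw [mNormSq, hΩ] at this
    simpa using this.symm
  have h0 : (inner ℂ (c • toE Ω) (toE x) : ℂ) = 0 := by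
    rw [inner_smul_left, ← mInner_toE, h, mul_zero]
  rw [mNormSq_toE, toE_add, toE_smul, @norm_add_sq ℂ _ _ _ _ (c • toE Ω) (toE x), h0]
  rw [norm_smul, mul_pow, mNormSq_toE]
  simp [hΩn]

end AGSPAux

open AGSPAux in
/-- If `K` is a `(D, Δ)`-approximate ground-space projection for the unique
(normalized) ground state `Ω` with `D·Δ ≤ 1/2`, then there is a normalized
product state `φ = L ⊗ R` with `|⟨Ω, φ⟩| ≥ 1/√(2D)`. -/
theorem exists_product_state_overlap {a b : ℕ} (D : ℕ) (Δ : ℝ)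
    (Ω : Matrix (Fin a) (Fin b) ℂ) (hΩ : mInner Ω Ω = 1)
    (K : Matrix (Fin a) (Fin b) ℂ →ₗ[ℂ] Matrix (Fin a) (Fin b) ℂ)
    -- ground space invariance
    (hK1 : K Ω = Ω)
    -- shrinking: `K` preserves `Ω^⊥` and shrinks norms-squared there by `Δ`
    (hK2 : ∀ v, mInner Ω v = 0 → mInner Ω (K v) = 0 ∧ mNormSq (K v) ≤ Δ * mNormSq v)
    -- entangling: `K` increases Schmidt rank by a factor of at most `D`
    (hK3 : ∀ φ : Matrix (Fin a) (Fin b) ℂ, (K φ).rank ≤ D * φ.rank)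
    (hD : 1 ≤ D) (hΔ : 0 ≤ Δ) (hDΔ : (D : ℝ) * Δ ≤ 1 / 2) :
    ∃ (L : Fin a → ℂ) (R : Fin b → ℂ),
      mInner (Matrix.vecMulVec L R) (Matrix.vecMulVec L R) = 1 ∧
      1 / Real.sqrt (2 * D) ≤ ‖mInner Ω (Matrix.vecMulVec L R)‖ := by
  classical
  have ha : 0 < a := by
    rcases Nat.eq_zero_or_pos a with h | h
    · exfalso; subst h; simp [mInner] at hΩ
    · exact h
  have hb : 0 < b := by
    rcases Nat.eq_zero_or_pos b with h | h
    · exfalso; subst h; simp [mInner] at hΩ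
    · exact h
  obtain ⟨p, hp, hmaxp⟩ := exists_max Ω ha hb
  rw [Set.mem_prod, mem_sphere_zero_iff_norm, mem_sphere_zero_iff_norm] at hp
  obtain ⟨hu₀, hv₀⟩ := hp
  set u₀ := p.1 with hu₀def
  set v₀ := p.2 with hv₀def
  set μ := f Ω p with hμdef
  have hμ0 : 0 ≤ μ := by rw [hμdef, f]; exact norm_nonneg _
  have hmax : ∀ (u : EuclideanSpace ℂ (Fin a)) (v : EuclideanSpace ℂ (Fin b)),
      ‖u‖ = 1 → ‖v‖ = 1 →
      ‖∑ i, ∑ j, star (Ω i j) * (u i * v j)‖ ≤ μ := by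
    intro u v hu hv
    exact hmaxp (u, v) (Set.mem_prod.2 ⟨mem_sphere_zero_iff_norm.2 hu,
      mem_sphere_zero_iff_norm.2 hv⟩)
  have hop := opnorm Ω μ hμ0 hmax
  -- μ is positive
  have hμpos : 0 < μ := by
    have hΩne : ∃ i j, Ω i j ≠ 0 := by
      by_contra h
      push_neg at h
      have : mInner Ω Ω = 0 := by
        rw [mInner]
        refine Finset.sum_eq_zero fun i _ => Finset.sum_eq_zero fun j _ => ?_
        rw [h i j, mul_zero]
      rw [this] at hΩ
      exact one_ne_zero hΩ.symm
    obtain ⟨i0, j0, hne⟩ := hΩne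
    have hval : (∑ i, ∑ j, star (Ω i j) *
        ((EuclideanSpace.single i0 (1:ℂ)) i * (EuclideanSpace.single j0 (1:ℂ)) j))
        = star (Ω i0 j0) := by
      rw [Finset.sum_eq_single i0]
      · rw [Finset.sum_eq_single j0]
        · simp
        · intro j _ hj
          simp [EuclideanSpace.single_apply, hj]
        · intro h; exact absurd (Finset.mem_univ j0) h
      · intro i _ hi
        refine Finset.sum_eq_zero fun j _ => ?_
        simp [EuclideanSpace.single_apply, hi]
      · intro h; exact absurd (Finset.mem_univ i0) h
    have h1 : ‖star (Ω i0 j0)‖ ≤ μ := by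
      rw [← hval]
      exact hmax _ _ (by simp [EuclideanSpace.norm_single]) (by simp [EuclideanSpace.norm_single])
    have h2 : 0 < ‖star (Ω i0 j0)‖ := by
      simp only [RCLike.star_def, Complex.norm_conj]
      exact norm_pos_iff.2 hne
    exact lt_of_lt_of_le h2 h1
  set φ : Matrix (Fin a) (Fin b) ℂ := Matrix.vecMulVec (fun i => u₀ i) (fun j => v₀ j) with hφdef
  have hφinner : mInner Ω φ = ∑ i, ∑ j, star (Ω i j) * (u₀ i * v₀ j) := rfl
  have habsc : ‖mInner Ω φ‖ = μ := by rw [hφinner]; rfl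
  -- φ is normalized
  have hsumu : (∑ i, star (u₀ i) * u₀ i) = 1 := by
    have : (inner ℂ u₀ u₀ : ℂ) = (‖u₀‖ : ℂ) ^ 2 := inner_self_eq_norm_sq_to_K u₀
    rw [PiLp.inner_apply] at this
    simp only [RCLike.inner_apply'] at this
    rw [hu₀] at this
    simpa using this
  have hsumv : (∑ j, star (v₀ j) * v₀ j) = 1 := by
    have : (inner ℂ v₀ v₀ : ℂ) = (‖v₀‖ : ℂ) ^ 2 := inner_self_eq_norm_sq_to_K v₀
    rw [PiLp.inner_apply] at this
    simp only [RCLike.inner_apply'] at this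
    rw [hv₀] at this
    simpa using this
  have hφ1 : mInner φ φ = 1 := by
    have : mInner φ φ = (∑ i, star (u₀ i) * u₀ i) * (∑ j, star (v₀ j) * v₀ j) := by
      rw [mInner, Finset.sum_mul_sum]
      refine Finset.sum_congr rfl fun i _ => Finset.sum_congr rfl fun j _ => ?_
      show star (u₀ i * v₀ j) * (u₀ i * v₀ j) = _
      rw [star_mul']
      ring
    rw [this, hsumu, hsumv, one_mul]
  have hφns : mNormSq φ = 1 := by rw [mNormSq, hφ1]; rfl
  -- decomposition
  set cc := mInner Ω φ with hccdef
  set w : Matrix (Fin a) (Fin b) ℂ := φ - cc • Ω with hwdef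
  have horth : mInner Ω w = 0 := by
    rw [hwdef, mInner_toE, toE_sub, toE_smul, inner_sub_right, inner_smul_right,
      ← mInner_toE Ω Ω, ← mInner_toE Ω φ, hΩ, mul_one, ← hccdef, sub_self]
  have hdecomp : φ = cc • Ω + w := by rw [hwdef]; abel
  obtain ⟨horthK, hshrink⟩ := hK2 w horth
  have hKφ : K φ = cc • Ω + K w := by
    conv_lhs => rw [hdecomp]
    rw [map_add, map_smul, hK1]
  -- overlap of K φ with Ω is cc
  have hKov : mInner Ω (K φ) = cc := by
    rw [hKφ, mInner_toE, toE_add, toE_smul, inner_add_right, inner_smul_right,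
      ← mInner_toE Ω Ω, ← mInner_toE Ω (K w), hΩ, mul_one, horthK, add_zero]
  -- norms
  have hwns : mNormSq w = 1 - μ^2 := by
    have := pyth Ω w cc horth hΩ
    rw [← hdecomp, hφns, habsc] at this
    linarith
  have hKns : mNormSq (K φ) = μ^2 + mNormSq (K w) := by
    have := pyth Ω (K w) cc horthK hΩ
    rw [← hKφ, habsc] at this
    linarith
  have hwnn : 0 ≤ mNormSq w := mNormSq_nonneg w
  have hKwnn : 0 ≤ mNormSq (K w) := mNormSq_nonneg _
  have hμle1sq : μ^2 ≤ 1 := by linarith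
  have hSle : mNormSq (K φ) ≤ μ^2 + Δ := by
    have h1 : mNormSq (K w) ≤ Δ * mNormSq w := hshrink
    have h2 : Δ * mNormSq w ≤ Δ := by
      rw [hwns]
      nlinarith
    linarith
  -- rank of K φ
  have hKrank : (K φ).rank ≤ D := by
    calc (K φ).rank ≤ D * φ.rank := hK3 φ
      _ ≤ D * 1 := Nat.mul_le_mul_left D (rank_vmv_le_one _ _)
      _ = D := Nat.mul_one D
  -- key inequality
  have hkey := rank_bound Ω (K φ) μ hμ0 hop D hKrank
  rw [hKov] at hkey
  have hkey2 : μ ≤ μ * Real.sqrt D * Real.sqrt (mNormSq (K φ)) := by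
    rw [← habsc]; exact hkey
  have hμD : 1 / (2 * (D:ℝ)) ≤ μ^2 :=
    numeric D Δ μ (mNormSq (K φ)) hD hΔ hDΔ hμpos (mNormSq_nonneg _) hSle hkey2
  refine ⟨(fun i => u₀ i), (fun j => v₀ j), hφ1, ?_⟩
  have hfinal : 1 / Real.sqrt (2*D) ≤ μ := by
    have h2D : (0:ℝ) < 2 * D := by positivity
    have := Real.sqrt_le_sqrt hμD
    rw [Real.sqrt_sq hμ0] at this
    calc 1 / Real.sqrt (2*D) = Real.sqrt (1/(2*D)) := by
          rw [one_div, one_div, Real.sqrt_inv]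
      _ ≤ μ := this
  rw [show mInner Ω (Matrix.vecMulVec (fun i => u₀ i) (fun j => v₀ j)) = cc from rfl]
  rw [show ‖cc‖ = μ from habsc]
  exact hfinal
end

section
/- Suppose there exists a product state φ with |⟨Ω, φ⟩| ≥ μ > 0, and a (D,Δ)-AGSP K with Δ < 1. Then for every ℓ ≥ 0, the Schmidt coefficients λ_1 ≥ λ_2 ≥ … of the ground state Ω satisfy Σ_{i > D^ℓ} λ_i^2 ≤ Δ^ℓ / μ^2. -/
open scoped InnerProductSpace

section helpers

variable {a b : ℕ}

lemma mInner_add_right (M N P : Matrix (Fin a) (Fin b) ℂ) :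
    mInner M (N + P) = mInner M N + mInner M P := by
  simp [mInner, mul_add, Finset.sum_add_distrib]

lemma mInner_smul_right (c : ℂ) (M N : Matrix (Fin a) (Fin b) ℂ) :
    mInner M (c • N) = c * mInner M N := by
  simp [mInner, Matrix.smul_apply, Finset.mul_sum, mul_left_comm]

lemma mInner_smul_left (c : ℂ) (M N : Matrix (Fin a) (Fin b) ℂ) :
    mInner (c • M) N = star c * mInner M N := by
  simp [mInner, Matrix.smul_apply, Finset.mul_sum, mul_left_comm, mul_assoc, star_mul']

lemma mInner_star (M N : Matrix (Fin a) (Fin b) ℂ) :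
    mInner N M = star (mInner M N) := by
  simp [mInner, star_sum, mul_comm]

lemma mInner_sub_right (M N P : Matrix (Fin a) (Fin b) ℂ) :
    mInner M (N - P) = mInner M N - mInner M P := by
  simp [mInner, mul_sub, Finset.sum_sub_distrib]

lemma mInner_sum_right {ι : Type*} (t : Finset ι) (f : ι → Matrix (Fin a) (Fin b) ℂ)
    (N : Matrix (Fin a) (Fin b) ℂ) :
    mInner N (∑ i ∈ t, f i) = ∑ i ∈ t, mInner N (f i) := by
  classical
  induction t using Finset.cons_induction with
  | empty => simp [mInner]
  | cons i t hi ih =>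
      rw [Finset.sum_cons, Finset.sum_cons, ← ih, mInner_add_right]

lemma mInner_add_left (M N P : Matrix (Fin a) (Fin b) ℂ) :
    mInner (M + N) P = mInner M P + mInner N P := by
  simp [mInner, add_mul, Finset.sum_add_distrib]

lemma mInner_sum_left {ι : Type*} (t : Finset ι) (f : ι → Matrix (Fin a) (Fin b) ℂ)
    (N : Matrix (Fin a) (Fin b) ℂ) :
    mInner (∑ i ∈ t, f i) N = ∑ i ∈ t, mInner (f i) N := by
  classical
  induction t using Finset.cons_induction with
  | empty => simp [mInner]
  | cons i t hi ih =>
      rw [Finset.sum_cons, Finset.sum_cons, ← ih, mInner_add_left]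

lemma mNormSq_nonneg (M : Matrix (Fin a) (Fin b) ℂ) : 0 ≤ mNormSq M := by
  unfold mNormSq mInner
  rw [Complex.re_sum]
  refine Finset.sum_nonneg fun i _ => ?_
  rw [Complex.re_sum]
  refine Finset.sum_nonneg fun j _ => ?_
  rw [Complex.star_def, ← Complex.normSq_eq_conj_mul_self]
  exact_mod_cast Complex.normSq_nonneg (M i j)

lemma mNormSq_eq (M : Matrix (Fin a) (Fin b) ℂ) :
    mNormSq M = ∑ i, ∑ j, ‖M i j‖ ^ 2 := by
  unfold mNormSq mInner
  rw [Complex.re_sum]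
  refine Finset.sum_congr rfl fun i _ => ?_
  rw [Complex.re_sum]
  refine Finset.sum_congr rfl fun j _ => ?_
  rw [Complex.sq_norm, Complex.star_def, ← Complex.normSq_eq_conj_mul_self]
  simp

lemma mInner_vecMulVec (u u' : Fin a → ℂ) (v v' : Fin b → ℂ) :
    mInner (Matrix.vecMulVec u v) (Matrix.vecMulVec u' v')
      = (∑ i, star (u i) * u' i) * (∑ k, star (v k) * v' k) := by
  unfold mInner
  rw [Finset.sum_mul_sum]
  refine Finset.sum_congr rfl fun i _ => Finset.sum_congr rfl fun k _ => ?_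
  simp [Matrix.vecMulVec_apply, star_mul']
  ring

lemma pythagoras (Ω M : Matrix (Fin a) (Fin b) ℂ) (hΩ : mInner Ω Ω = 1)
    (h : mInner Ω M = 0) (c : ℂ) :
    mNormSq (c • Ω + M) = ‖c‖ ^ 2 + mNormSq M := by
  have hM : mInner M Ω = 0 := by rw [mInner_star, h, star_zero]
  have expand : mInner (c • Ω + M) (c • Ω + M) = star c * c + mInner M M := by
    simp only [mInner_add_left, mInner_add_right, mInner_smul_left, mInner_smul_right,
      hΩ, h, hM]
    ring
  unfold mNormSq
  rw [expand, Complex.add_re]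
  congr 1
  rw [Complex.star_def, ← Complex.normSq_eq_conj_mul_self, Complex.sq_norm]
  simp

lemma exchange {s : ℕ} (r : ℕ) (lam t : Fin s → ℝ)
    (hnonneg : ∀ j, 0 ≤ lam j) (hmono : ∀ j k : Fin s, j ≤ k → lam k ≤ lam j)
    (ht0 : ∀ j, 0 ≤ t j) (ht1 : ∀ j, t j ≤ 1) (htsum : ∑ j, t j ≤ (r : ℝ)) :
    ∑ j, lam j ^ 2 * t j ≤ ∑ j : Fin s, if (j : ℕ) < r then lam j ^ 2 else 0 := by
  classical
  by_cases hrs : s ≤ r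
  · have : ∀ j : Fin s, (j : ℕ) < r := fun j => lt_of_lt_of_le j.isLt hrs
    calc ∑ j, lam j ^ 2 * t j ≤ ∑ j, lam j ^ 2 := by
          apply Finset.sum_le_sum; intro j _
          nlinarith [sq_nonneg (lam j), ht1 j, ht0 j]
      _ = _ := by
          apply Finset.sum_congr rfl; intro j _; rw [if_pos (this j)]
  · push_neg at hrs
    set jr : Fin s := ⟨r, hrs⟩ with hjr
    set P : Finset (Fin s) := Finset.univ.filter (fun j => (j : ℕ) < r) with hP
    have hPIio : P = Finset.Iio jr := by
      rw [hP]; ext j; simp only [Finset.mem_filter, Finset.mem_univ, true_and, Finset.mem_Iio, Fin.lt_def]; exact Iff.rfl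
    have hcard : (P.card : ℝ) = r := by rw [hPIio, Fin.card_Iio]
    have hsplit : ∑ j, lam j ^ 2 * t j
        = ∑ j ∈ P, lam j ^ 2 * t j + ∑ j ∈ Pᶜ, lam j ^ 2 * t j :=
      (Finset.sum_add_sum_compl P _).symm
    have htail : ∑ j ∈ Pᶜ, lam j ^ 2 * t j ≤ lam jr ^ 2 * ∑ j ∈ Pᶜ, t j := by
      rw [Finset.mul_sum]
      apply Finset.sum_le_sum; intro j hj
      have hjP : ¬ (j : ℕ) < r := by simpa [hP] using hj
      have : lam j ≤ lam jr := hmono jr j (by simp only [Fin.le_def, hjr]; omega)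
      have h2 : lam j ^ 2 ≤ lam jr ^ 2 := by nlinarith [hnonneg j]
      exact mul_le_mul_of_nonneg_right h2 (ht0 j)
    have hcsum : ∑ j ∈ Pᶜ, t j ≤ (r : ℝ) - ∑ j ∈ P, t j := by
      have := Finset.sum_add_sum_compl P t
      linarith
    have hfin : lam jr ^ 2 * ((r : ℝ) - ∑ j ∈ P, t j)
        = ∑ j ∈ P, lam jr ^ 2 * (1 - t j) := by
      have h : (r : ℝ) - ∑ j ∈ P, t j = ∑ j ∈ P, (1 - t j) := by
        rw [Finset.sum_sub_distrib]
        simp [hcard]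
      rw [h, Finset.mul_sum]
    have hmain : ∑ j ∈ P, (lam j ^ 2 * t j + lam jr ^ 2 * (1 - t j)) ≤ ∑ j ∈ P, lam j ^ 2 := by
      apply Finset.sum_le_sum; intro j hj
      have hjP : (j : ℕ) < r := by simpa [hP] using hj
      have : lam jr ≤ lam j := hmono j jr (by simp only [Fin.le_def, hjr]; omega)
      have h2 : lam jr ^ 2 ≤ lam j ^ 2 := by nlinarith [hnonneg jr]
      nlinarith [ht1 j, ht0 j]
    have hrhs : ∑ j ∈ P, lam j ^ 2 = ∑ j : Fin s, if (j : ℕ) < r then lam j ^ 2 else 0 := by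
      rw [← Finset.sum_filter]
    have h1 : lam jr ^ 2 * ∑ j ∈ Pᶜ, t j ≤ lam jr ^ 2 * ((r : ℝ) - ∑ j ∈ P, t j) :=
      mul_le_mul_of_nonneg_left hcsum (sq_nonneg _)
    calc ∑ j, lam j ^ 2 * t j
        ≤ ∑ j ∈ P, lam j ^ 2 * t j + lam jr ^ 2 * ((r : ℝ) - ∑ j ∈ P, t j) := by
          rw [hsplit]; linarith
      _ = ∑ j ∈ P, (lam j ^ 2 * t j + lam jr ^ 2 * (1 - t j)) := by
          rw [hfin, Finset.sum_add_distrib]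
      _ ≤ ∑ j ∈ P, lam j ^ 2 := hmain
      _ = _ := hrhs

lemma eckart_young {a b s : ℕ} (r : ℕ) (lam : Fin s → ℝ)
    (L : Fin s → (Fin a → ℂ)) (R : Fin s → (Fin b → ℂ))
    (hL : ∀ j k, ∑ i, star (L j i) * L k i = if j = k then (1 : ℂ) else 0)
    (hR : ∀ j k, ∑ i, star (R j i) * R k i = if j = k then (1 : ℂ) else 0)
    (hnonneg : ∀ j, 0 ≤ lam j)
    (ψ : Matrix (Fin a) (Fin b) ℂ) (hrank : ψ.rank ≤ r)
    (exch : ∀ t : Fin s → ℝ, (∀ j, 0 ≤ t j) → (∀ j, t j ≤ 1) → (∑ j, t j ≤ (r : ℝ)) →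
       ∑ j, lam j ^ 2 * t j ≤ ∑ j : Fin s, if (j : ℕ) < r then lam j ^ 2 else 0) :
    ‖mInner (∑ j, (lam j : ℂ) • Matrix.vecMulVec (L j) (R j)) ψ‖ ^ 2
      ≤ mNormSq ψ * ∑ j : Fin s, if (j : ℕ) < r then lam j ^ 2 else 0 := by
  classical
  set L' : Fin s → EuclideanSpace ℂ (Fin a) := fun j => (WithLp.equiv 2 _).symm (L j) with hL'def
  set R' : Fin s → EuclideanSpace ℂ (Fin b) := fun j => (WithLp.equiv 2 _).symm (R j) with hR'def
  have hL' : Orthonormal ℂ L' := by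
    rw [orthonormal_iff_ite]
    intro j k
    have h : ⟪L' j, L' k⟫_ℂ = ∑ i, star (L j i) * L k i := by
      rw [PiLp.inner_apply]
      exact Finset.sum_congr rfl fun i _ => by
        simp [hL'def, RCLike.inner_apply, mul_comm, Complex.star_def]
    rw [h, hL j k]
  have hR' : Orthonormal ℂ R' := by
    rw [orthonormal_iff_ite]
    intro j k
    have h : ⟪R' j, R' k⟫_ℂ = ∑ i, star (R j i) * R k i := by
      rw [PiLp.inner_apply]
      exact Finset.sum_congr rfl fun i _ => by
        simp [hR'def, RCLike.inner_apply, mul_comm, Complex.star_def]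
    rw [h, hR j k]
  set W : Submodule ℂ (EuclideanSpace ℂ (Fin a)) := Submodule.map ((WithLp.linearEquiv 2 ℂ (Fin a → ℂ)).symm : (Fin a → ℂ) →ₗ[ℂ] EuclideanSpace ℂ (Fin a))
    (LinearMap.range ψ.mulVecLin) with hWdef
  have hfin : Module.finrank ℂ W ≤ r := (LinearEquiv.finrank_map_eq _ _).trans_le hrank
  set n := Module.finrank ℂ W with hn
  set B := stdOrthonormalBasis ℂ W with hB
  set e : Fin n → EuclideanSpace ℂ (Fin a) := fun k => (B k : EuclideanSpace ℂ (Fin a)) with he_def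
  have he : Orthonormal ℂ e := by
    rw [orthonormal_iff_ite]
    intro j k
    rw [he_def]; dsimp only
    rw [← Submodule.coe_inner]
    exact orthonormal_iff_ite.mp B.orthonormal j k
  set w : Fin s → EuclideanSpace ℂ (Fin a) :=
    fun j => (WithLp.equiv 2 _).symm (ψ.mulVec (star (R j))) with hw_def
  have hwW : ∀ j, w j ∈ W := fun j => Submodule.mem_map.mpr ⟨_, ⟨star (R j), rfl⟩, rfl⟩
  -- key identity
  have key1 : mInner (∑ j, (lam j : ℂ) • Matrix.vecMulVec (L j) (R j)) ψ
      = ∑ j, (lam j : ℂ) * ⟪L' j, w j⟫_ℂ := by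
    rw [mInner_sum_left]
    refine Finset.sum_congr rfl fun j _ => ?_
    rw [mInner_smul_left]
    have hst : star ((lam j : ℂ)) = (lam j : ℂ) := by
      rw [Complex.star_def, Complex.conj_ofReal]
    rw [hst]
    congr 1
    rw [PiLp.inner_apply]
    unfold mInner
    refine Finset.sum_congr rfl fun i _ => ?_
    have : w j i = ∑ k, ψ i k * star (R j k) := by
      simp [hw_def, PiLp.toLp_apply, Matrix.mulVec, dotProduct, Pi.star_apply,
        Complex.star_def]
    rw [RCLike.inner_apply]
    show ∑ k, star (Matrix.vecMulVec (L j) (R j) i k) * ψ i k = _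
    have hlhs : ∑ k, star (Matrix.vecMulVec (L j) (R j) i k) * ψ i k
        = star (L j i) * ∑ k, ψ i k * star (R j k) := by
      rw [Finset.mul_sum]
      refine Finset.sum_congr rfl fun k _ => ?_
      simp [Matrix.vecMulVec_apply, star_mul']
      ring
    rw [hlhs, ← this]
    exact mul_comm _ _
  have expand : ∀ j, ⟪L' j, w j⟫_ℂ = ∑ k, ⟪L' j, e k⟫_ℂ * ⟪e k, w j⟫_ℂ := by
    intro j
    have hsum : ∑ k, ⟪e k, w j⟫_ℂ • e k = w j := by
      have h0 := congrArg (Subtype.val) (B.sum_repr' (⟨w j, hwW j⟩ : W))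
      rw [Submodule.coe_sum] at h0
      simpa [he_def, Submodule.coe_inner] using h0
    conv_lhs => rw [← hsum]
    rw [inner_sum]
    refine Finset.sum_congr rfl fun k _ => ?_
    rw [inner_smul_right]; ring
  -- absolute value bound
  have habs : ‖mInner (∑ j, (lam j : ℂ) • Matrix.vecMulVec (L j) (R j)) ψ‖
      ≤ ∑ j, ∑ k, (lam j * ‖⟪L' j, e k⟫_ℂ‖) * ‖⟪e k, w j⟫_ℂ‖ := by
    rw [key1]
    refine le_trans (norm_sum_le _ _) ?_
    refine Finset.sum_le_sum fun j _ => ?_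
    rw [expand j, Finset.mul_sum]
    refine le_trans (norm_sum_le _ _) ?_
    refine Finset.sum_le_sum fun k _ => ?_
    rw [norm_mul, norm_mul, Complex.norm_real, Real.norm_of_nonneg (hnonneg j), mul_assoc]
  -- Cauchy–Schwarz over pairs
  set f : Fin s × Fin n → ℝ := fun p => lam p.1 * ‖⟪L' p.1, e p.2⟫_ℂ‖ with hf
  set g : Fin s × Fin n → ℝ := fun p => ‖⟪e p.2, w p.1⟫_ℂ‖ with hg
  have hCS := Finset.sum_mul_sq_le_sq_mul_sq Finset.univ f g
  have hsum_fg : ∑ p : Fin s × Fin n, f p * g p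
      = ∑ j, ∑ k, (lam j * ‖⟪L' j, e k⟫_ℂ‖) * ‖⟪e k, w j⟫_ℂ‖ := by
    rw [Fintype.sum_prod_type]
  -- factor A
  set t : Fin s → ℝ := fun j => ∑ k, ‖⟪L' j, e k⟫_ℂ‖ ^ 2 with ht
  have hfA : ∑ p : Fin s × Fin n, f p ^ 2 = ∑ j, lam j ^ 2 * t j := by
    rw [Fintype.sum_prod_type]
    refine Finset.sum_congr rfl fun j _ => ?_
    rw [ht, Finset.mul_sum]
    exact Finset.sum_congr rfl fun k _ => by rw [hf]; ring
  have ht0 : ∀ j, 0 ≤ t j := fun j => Finset.sum_nonneg fun k _ => sq_nonneg _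
  have ht1 : ∀ j, t j ≤ 1 := by
    intro j
    have hb := he.sum_inner_products_le (L' j) (s := Finset.univ)
    have hnorm : ‖L' j‖ = 1 := hL'.1 j
    rw [hnorm] at hb
    calc t j = ∑ k, ‖⟪e k, L' j⟫_ℂ‖ ^ 2 := by
          refine Finset.sum_congr rfl fun k _ => ?_
          rw [← norm_inner_symm]
      _ ≤ 1 ^ 2 := hb
      _ = 1 := one_pow 2
  have htsum : ∑ j, t j ≤ (r : ℝ) := by
    have hswap : ∑ j, t j = ∑ k : Fin n, ∑ j, ‖⟪L' j, e k⟫_ℂ‖ ^ 2 :=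
      Finset.sum_comm
    have hbk : ∀ k : Fin n, ∑ j, ‖⟪L' j, e k⟫_ℂ‖ ^ 2 ≤ 1 := by
      intro k
      have hb := hL'.sum_inner_products_le (e k) (s := Finset.univ)
      have hnorm : ‖e k‖ = 1 := he.1 k
      rw [hnorm, one_pow] at hb
      calc ∑ j, ‖⟪L' j, e k⟫_ℂ‖ ^ 2 = ∑ j, ‖⟪L' j, e k⟫_ℂ‖ ^ 2 := by
            exact Finset.sum_congr rfl fun j _ => rfl
        _ ≤ 1 := hb
    calc ∑ j, t j ≤ ∑ _k : Fin n, (1 : ℝ) := by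
          rw [hswap]; exact Finset.sum_le_sum fun k _ => hbk k
      _ = (n : ℝ) := by simp
      _ ≤ (r : ℝ) := by exact_mod_cast hfin
  have hA : ∑ p : Fin s × Fin n, f p ^ 2 ≤ ∑ j : Fin s, if (j : ℕ) < r then lam j ^ 2 else 0 := by
    rw [hfA]; exact exch t ht0 ht1 htsum
  -- factor B
  have hgB : ∑ p : Fin s × Fin n, g p ^ 2 ≤ mNormSq ψ := by
    rw [Fintype.sum_prod_type]
    have step1 : ∀ j, ∑ k, g (j, k) ^ 2 ≤ ‖w j‖ ^ 2 := by
      intro j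
      have hb := he.sum_inner_products_le (w j) (s := Finset.univ)
      calc ∑ k, g (j, k) ^ 2 = ∑ k, ‖⟪e k, w j⟫_ℂ‖ ^ 2 := by
            exact Finset.sum_congr rfl fun k _ => by rw [hg]
        _ ≤ ‖w j‖ ^ 2 := hb
    refine le_trans (Finset.sum_le_sum fun j _ => step1 j) ?_
    set row : Fin a → EuclideanSpace ℂ (Fin b) :=
      fun i => (WithLp.equiv 2 _).symm (fun k => ψ i k) with hrow
    have hwinner : ∀ j i, w j i = ⟪R' j, row i⟫_ℂ := by
      intro j i
      rw [PiLp.inner_apply]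
      simp only [hw_def, hrow, hR'def, PiLp.toLp_apply, RCLike.inner_apply]
      simp [Matrix.mulVec, dotProduct, Complex.star_def, mul_comm]
    have hwnorm : ∀ j, ‖w j‖ ^ 2 = ∑ i, ‖⟪R' j, row i⟫_ℂ‖ ^ 2 := by
      intro j
      rw [EuclideanSpace.norm_eq, Real.sq_sqrt (Finset.sum_nonneg fun i _ => sq_nonneg _)]
      refine Finset.sum_congr rfl fun i _ => ?_
      rw [hwinner j i]
    have hrownorm : ∀ i, ∑ j, ‖⟪R' j, row i⟫_ℂ‖ ^ 2 ≤ ∑ k, ‖ψ i k‖ ^ 2 := by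
      intro i
      have hb := hR'.sum_inner_products_le (row i) (s := Finset.univ)
      have : ‖row i‖ ^ 2 = ∑ k, ‖ψ i k‖ ^ 2 := by
        rw [EuclideanSpace.norm_eq, Real.sq_sqrt (Finset.sum_nonneg fun k _ => sq_nonneg _)]
        exact Finset.sum_congr rfl fun k _ => by rw [hrow]; simp [PiLp.toLp_apply]
      rw [this] at hb
      calc ∑ j, ‖⟪R' j, row i⟫_ℂ‖ ^ 2 = ∑ j, ‖⟪R' j, row i⟫_ℂ‖ ^ 2 :=
            Finset.sum_congr rfl fun j _ => rfl
        _ ≤ _ := hb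
    calc ∑ j, ‖w j‖ ^ 2 = ∑ i, ∑ j, ‖⟪R' j, row i⟫_ℂ‖ ^ 2 := by
          rw [Finset.sum_comm]
          exact Finset.sum_congr rfl fun j _ => hwnorm j
      _ ≤ ∑ i, ∑ k, ‖ψ i k‖ ^ 2 := Finset.sum_le_sum fun i _ => hrownorm i
      _ = mNormSq ψ := (mNormSq_eq ψ).symm
  -- combine
  have habs2 : ‖mInner (∑ j, (lam j : ℂ) • Matrix.vecMulVec (L j) (R j)) ψ‖ ^ 2
      ≤ (∑ p : Fin s × Fin n, f p * g p) ^ 2 := by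
    rw [hsum_fg]
    exact pow_le_pow_left₀ (norm_nonneg _) habs 2
  have hS0 : 0 ≤ ∑ j : Fin s, if (j : ℕ) < r then lam j ^ 2 else 0 :=
    Finset.sum_nonneg fun j _ => by positivity
  calc ‖mInner (∑ j, (lam j : ℂ) • Matrix.vecMulVec (L j) (R j)) ψ‖ ^ 2
      ≤ (∑ p : Fin s × Fin n, f p ^ 2) * (∑ p : Fin s × Fin n, g p ^ 2) :=
        le_trans habs2 hCS
    _ ≤ (∑ j : Fin s, if (j : ℕ) < r then lam j ^ 2 else 0) * mNormSq ψ := by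
        apply mul_le_mul hA hgB (Finset.sum_nonneg fun p _ => sq_nonneg _) hS0
    _ = mNormSq ψ * ∑ j : Fin s, if (j : ℕ) < r then lam j ^ 2 else 0 := mul_comm _ _

end helpers

set_option maxHeartbeats 1000000 in
/-- If there is a normalized product state `φ` with `|⟨Ω, φ⟩| ≥ μ > 0` and a
`(D,Δ)`-AGSP `K` with `Δ < 1`, then for every `ℓ ≥ 0` the Schmidt coefficients
`λ_1 ≥ λ_2 ≥ …` of the ground state `Ω` satisfy `Σ_{i > D^ℓ} λ_i² ≤ Δ^ℓ/μ²`. -/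
theorem schmidt_tail_bound {a b s : ℕ} (D : ℕ) (Δ μ : ℝ)
    (Ω : Matrix (Fin a) (Fin b) ℂ) (hΩ : mInner Ω Ω = 1)
    -- Schmidt decomposition of the ground state `Ω`
    (lam : Fin s → ℝ) (L : Fin s → (Fin a → ℂ)) (R : Fin s → (Fin b → ℂ))
    (hL : ∀ j k, ∑ i, star (L j i) * L k i = if j = k then (1 : ℂ) else 0)
    (hR : ∀ j k, ∑ i, star (R j i) * R k i = if j = k then (1 : ℂ) else 0)
    (hnonneg : ∀ j, 0 ≤ lam j)
    (hmono : ∀ j k : Fin s, j ≤ k → lam k ≤ lam j)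
    (hdecomp : Ω = ∑ j, (lam j : ℂ) • Matrix.vecMulVec (L j) (R j))
    -- a product state with overlap at least `μ > 0` with the ground state
    (hμ : 0 < μ)
    (φL : Fin a → ℂ) (φR : Fin b → ℂ)
    (hφ : mInner (Matrix.vecMulVec φL φR) (Matrix.vecMulVec φL φR) = 1)
    (hover : μ ≤ ‖mInner Ω (Matrix.vecMulVec φL φR)‖)
    -- a `(D,Δ)`-AGSP
    (K : Matrix (Fin a) (Fin b) ℂ →ₗ[ℂ] Matrix (Fin a) (Fin b) ℂ)
    (hK1 : K Ω = Ω)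
    (hK2 : ∀ v, mInner Ω v = 0 → mInner Ω (K v) = 0 ∧ mNormSq (K v) ≤ Δ * mNormSq v)
    (hK3 : ∀ ψ : Matrix (Fin a) (Fin b) ℂ, (K ψ).rank ≤ D * ψ.rank)
    (hΔ0 : 0 ≤ Δ) (hΔ1 : Δ < 1) :
    ∀ ℓ : ℕ, (∑ j : Fin s, if D ^ ℓ ≤ (j : ℕ) then lam j ^ 2 else 0) ≤ Δ ^ ℓ / μ ^ 2 := by
  classical
  intro ℓ
  set φ := Matrix.vecMulVec φL φR with hφdef
  set c := mInner Ω φ with hc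
  set u := φ - c • Ω with hu_def
  have hΩu : mInner Ω u = 0 := by
    rw [hu_def, mInner_sub_right, mInner_smul_right, hΩ]
    ring
  have hφeq : φ = c • Ω + u := by rw [hu_def]; abel
  -- sum of squares of Schmidt coefficients is one
  have hsq1 : ∑ j, lam j ^ 2 = 1 := by
    have key : mInner Ω Ω = ∑ j, ((lam j : ℂ)) ^ 2 := by
      conv_lhs => rw [hdecomp, mInner_sum_left]
      refine Finset.sum_congr rfl fun j _ => ?_
      rw [mInner_smul_left, mInner_sum_right]
      have h1 : ∀ k, mInner (Matrix.vecMulVec (L j) (R j))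
          ((lam k : ℂ) • Matrix.vecMulVec (L k) (R k))
          = (lam k : ℂ) * ((if j = k then (1:ℂ) else 0) * (if j = k then (1:ℂ) else 0)) := by
        intro k
        rw [mInner_smul_right, mInner_vecMulVec, hL, hR]
      simp only [h1]
      have hsum : ∑ k, (lam k : ℂ) * ((if j = k then (1:ℂ) else 0) * (if j = k then (1:ℂ) else 0))
          = (lam j : ℂ) := by
        rw [Finset.sum_eq_single j]
        · simp
        · intro k _ hk
          rw [if_neg (fun h => hk h.symm)]
          ring
        · intro h; exact absurd (Finset.mem_univ j) h
      rw [hsum, Complex.star_def, Complex.conj_ofReal]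
      ring
    rw [hΩ] at key
    have : ((∑ j, lam j ^ 2 : ℝ) : ℂ) = 1 := by
      push_cast
      rw [← key]
    exact_mod_cast this
  -- iterates of K
  have hKn_Ω : ∀ m : ℕ, (K ^ m) Ω = Ω := by
    intro m
    induction m with
    | zero => simp
    | succ m ih => rw [pow_succ', Module.End.mul_apply, ih, hK1]
  have hiter : ∀ m : ℕ, mInner Ω ((K ^ m) u) = 0 ∧ mNormSq ((K ^ m) u) ≤ Δ ^ m * mNormSq u := by
    intro m
    induction m with
    | zero => exact ⟨by simpa using hΩu, by simp⟩
    | succ m ih =>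
        have hstep := hK2 ((K ^ m) u) ih.1
        constructor
        · rw [pow_succ', Module.End.mul_apply]
          exact hstep.1
        · rw [pow_succ', Module.End.mul_apply]
          calc mNormSq (K ((K ^ m) u)) ≤ Δ * mNormSq ((K ^ m) u) := hstep.2
            _ ≤ Δ * (Δ ^ m * mNormSq u) := mul_le_mul_of_nonneg_left ih.2 hΔ0
            _ = Δ ^ (m + 1) * mNormSq u := by ring
  -- decomposition of the iterated state
  set ψ := (K ^ ℓ) φ with hψ_def
  have hψdecomp : ψ = c • Ω + (K ^ ℓ) u := by
    rw [hψ_def, hφeq, map_add, map_smul, hKn_Ω ℓ]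
  have hcψ : mInner Ω ψ = c := by
    rw [hψdecomp, mInner_add_right, mInner_smul_right, hΩ, (hiter ℓ).1]
    ring
  have hnψ : mNormSq ψ = ‖c‖ ^ 2 + mNormSq ((K ^ ℓ) u) := by
    rw [hψdecomp]
    exact pythagoras Ω _ hΩ (hiter ℓ).1 c
  have hnφ : (1 : ℝ) = ‖c‖ ^ 2 + mNormSq u := by
    have h := pythagoras Ω u hΩ hΩu c
    rw [← hφeq] at h
    have : mNormSq φ = 1 := by rw [mNormSq, hφ]; simp
    linarith [h, this.symm.le, this.le]
  -- rank bound
  have hrankφ : φ.rank ≤ 1 := by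
    rw [hφdef, Matrix.vecMulVec_eq (Fin 1)]
    calc (Matrix.replicateCol (Fin 1) φL * Matrix.replicateRow (Fin 1) φR).rank
        ≤ (Matrix.replicateCol (Fin 1) φL).rank := Matrix.rank_mul_le_left _ _
      _ ≤ Fintype.card (Fin 1) := Matrix.rank_le_card_width _
      _ = 1 := Fintype.card_fin 1
  have hrank : ∀ m : ℕ, ((K ^ m) φ).rank ≤ D ^ m := by
    intro m
    induction m with
    | zero => simpa using hrankφ
    | succ m ih =>
        rw [pow_succ', Module.End.mul_apply]
        calc (K ((K ^ m) φ)).rank ≤ D * ((K ^ m) φ).rank := hK3 _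
          _ ≤ D * D ^ m := Nat.mul_le_mul_left D ih
          _ = D ^ (m + 1) := by ring
  -- Eckart–Young
  have hEY := eckart_young (D ^ ℓ) lam L R hL hR hnonneg ψ (hrank ℓ)
    (fun t ht0 ht1 hts => exchange (D ^ ℓ) lam t hnonneg hmono ht0 ht1 hts)
  rw [← hdecomp, hcψ, hnψ] at hEY
  -- arithmetic conclusion
  set S := ∑ j : Fin s, if (j : ℕ) < D ^ ℓ then lam j ^ 2 else 0 with hS
  set T := ∑ j : Fin s, if D ^ ℓ ≤ (j : ℕ) then lam j ^ 2 else 0 with hT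
  have hST : S + T = 1 := by
    rw [hS, hT, ← Finset.sum_add_distrib, ← hsq1]
    refine Finset.sum_congr rfl fun j _ => ?_
    by_cases h : (j : ℕ) < D ^ ℓ
    · rw [if_pos h, if_neg (by omega)]; ring
    · rw [if_neg h, if_pos (by omega)]; ring
  have hT0 : 0 ≤ T := Finset.sum_nonneg fun j _ => by positivity
  have hS0 : 0 ≤ S := Finset.sum_nonneg fun j _ => by positivity
  have hS1 : S ≤ 1 := by linarith
  have hw0 : 0 ≤ mNormSq ((K ^ ℓ) u) := mNormSq_nonneg _
  have hwb : mNormSq ((K ^ ℓ) u) ≤ Δ ^ ℓ := by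
    have h1 := (hiter ℓ).2
    have h2 : mNormSq u ≤ 1 := by nlinarith [sq_nonneg (‖c‖)]
    calc mNormSq ((K ^ ℓ) u) ≤ Δ ^ ℓ * mNormSq u := h1
      _ ≤ Δ ^ ℓ * 1 := mul_le_mul_of_nonneg_left h2 (pow_nonneg hΔ0 ℓ)
      _ = Δ ^ ℓ := mul_one _
  have hc2 : μ ^ 2 ≤ ‖c‖ ^ 2 := pow_le_pow_left₀ hμ.le hover 2
  -- from hEY : abs c ^ 2 ≤ (abs c ^ 2 + w) * S
  have harith : ∀ c2 wl S' T' dl : ℝ, c2 ≤ (c2 + wl) * S' → S' + T' = 1 → 0 ≤ T' → 0 ≤ S' →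
      S' ≤ 1 → 0 ≤ wl → wl ≤ dl → μ ^ 2 ≤ c2 → μ ^ 2 * T' ≤ dl := by
    intro c2 wl S' T' dl e0 e1 e2 e3 e4 e5 e6 e7
    have f1 : c2 * T' ≤ wl * S' := by nlinarith
    have f2 : wl * S' ≤ wl := by nlinarith
    have f3 : μ ^ 2 * T' ≤ c2 * T' := mul_le_mul_of_nonneg_right e7 e2
    linarith
  have hkey : μ ^ 2 * T ≤ Δ ^ ℓ :=
    harith (‖c‖ ^ 2) (mNormSq ((K ^ ℓ) u)) S T (Δ ^ ℓ)
      hEY hST hT0 hS0 hS1 hw0 hwb hc2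
  rw [le_div_iff₀ (by positivity : (0:ℝ) < μ ^ 2)]
  calc T * μ ^ 2 = μ ^ 2 * T := mul_comm _ _
    _ ≤ Δ ^ ℓ := hkey
end

section
/- Let ℓ ≥ 1 and let n_1, …, n_ℓ be nonnegative integers with Σ_i n_i ≤ ℓ/2^k for some integer k ≥ 1. Then Π_{i=1}^ℓ (n_i + 1) ≤ 2^{ℓ/2^k}. Consequently, the product over all rounds k = 0, 1, 2, … of such factors is at most 4^ℓ. -/
lemma nat_prod_succ_le {m : ℕ} (n : Fin m → ℕ) :
    (∏ i, ((n i : ℝ) + 1)) ≤ (2 : ℝ) ^ (∑ i, (n i : ℝ)) := by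
  calc (∏ i, ((n i : ℝ) + 1)) ≤ ∏ i, (2 : ℝ) ^ (n i : ℝ) := by
        apply Finset.prod_le_prod
        · intro i _; positivity
        · intro i _
          rw [Real.rpow_natCast]
          have h := Nat.lt_two_pow_self (n := n i)
          calc ((n i : ℝ) + 1) = ((n i + 1 : ℕ) : ℝ) := by push_cast; ring
            _ ≤ ((2 ^ n i : ℕ) : ℝ) := by exact_mod_cast h
            _ = (2 : ℝ) ^ (n i) := by push_cast; ring
    _ = (2 : ℝ) ^ (∑ i, (n i : ℝ)) := by
        rw [← Real.rpow_sum_of_pos (by norm_num)]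

/-- If `ℓ ≥ 1` and nonnegative integers `n_1, …, n_ℓ` satisfy
`Σ_i n_i ≤ ℓ/2^k` for some `k ≥ 1`, then `Π_i (n_i + 1) ≤ 2^{ℓ/2^k}`.
Consequently, the product over all rounds `k = 0, 1, 2, …` of such
factors is at most `4^ℓ`. -/
theorem prod_succ_le_rounds (ℓ : ℕ) (hℓ : 1 ≤ ℓ) :
    (∀ (k : ℕ), 1 ≤ k → ∀ n : Fin ℓ → ℕ,
      (∑ i, (n i : ℝ)) ≤ (ℓ : ℝ) / 2 ^ k →
      (∏ i, ((n i : ℝ) + 1)) ≤ (2 : ℝ) ^ ((ℓ : ℝ) / 2 ^ k)) ∧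
    (∀ (K : ℕ) (n : ℕ → Fin ℓ → ℕ),
      (∀ k, (∑ i, (n k i : ℝ)) ≤ (ℓ : ℝ) / 2 ^ k) →
      (∏ k ∈ Finset.range K, ∏ i, ((n k i : ℝ) + 1)) ≤ (4 : ℝ) ^ ℓ) := by
  have key : ∀ (k : ℕ) (n : Fin ℓ → ℕ),
      (∑ i, (n i : ℝ)) ≤ (ℓ : ℝ) / 2 ^ k →
      (∏ i, ((n i : ℝ) + 1)) ≤ (2 : ℝ) ^ ((ℓ : ℝ) / 2 ^ k) := by
    intro k n hsum
    exact (nat_prod_succ_le n).trans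
      (Real.rpow_le_rpow_of_exponent_le one_le_two hsum)
  refine ⟨fun k _ => key k, fun K n hn => ?_⟩
  calc (∏ k ∈ Finset.range K, ∏ i, ((n k i : ℝ) + 1))
      ≤ ∏ k ∈ Finset.range K, (2 : ℝ) ^ ((ℓ : ℝ) / 2 ^ k) := by
        apply Finset.prod_le_prod
        · intro k _; positivity
        · intro k _; exact key k (n k) (hn k)
    _ = (2 : ℝ) ^ (∑ k ∈ Finset.range K, (ℓ : ℝ) / 2 ^ k) := by
        rw [← Real.rpow_sum_of_pos (by norm_num)]
    _ ≤ (2 : ℝ) ^ ((2 : ℝ) * ℓ) := by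
        apply Real.rpow_le_rpow_of_exponent_le one_le_two
        have : ∑ k ∈ Finset.range K, (ℓ : ℝ) / 2 ^ k
            = (ℓ : ℝ) * ∑ k ∈ Finset.range K, ((2 : ℝ)⁻¹) ^ k := by
          rw [Finset.mul_sum]; congr 1; ext k
          rw [inv_pow]; ring
        rw [this]
        have hg : ∑ k ∈ Finset.range K, ((2 : ℝ)⁻¹) ^ k ≤ 2 := by
          have := geom_sum_Ico_le_of_lt_one (x := (2:ℝ)⁻¹) (by norm_num) (by norm_num) (m := 0) (n := K)
          norm_num at this ⊢; exact this
        calc (ℓ : ℝ) * ∑ k ∈ Finset.range K, ((2 : ℝ)⁻¹) ^ k ≤ (ℓ : ℝ) * 2 := by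
              exact mul_le_mul_of_nonneg_left hg (by positivity)
          _ = 2 * ℓ := by ring
    _ = (4 : ℝ) ^ ℓ := by
        rw [show ((2:ℝ)*ℓ) = ((2*ℓ : ℕ) : ℝ) by push_cast; ring, Real.rpow_natCast,
          pow_mul]
        norm_num
end

section
/- Let P_1, …, P_m be commuting orthogonal projections, N = Σ_i (1 - P_i), and let p be a polynomial with p(0) = 1 and |p(x)| ≤ δ for all integers 1 ≤ x ≤ m. Then the operator p(N) acts as the identity on the joint ground space ∩_i ran(P_i), and for every vector ψ orthogonal to this joint ground space (within the span of the violating sectors), ‖p(N)ψ‖ ≤ δ‖ψ‖. -/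
open Module
open scoped InnerProductSpace

variable {H : Type*} [NormedAddCommGroup H] [InnerProductSpace ℂ H] [FiniteDimensional ℂ H]

private lemma pythag_aux {ι : Type*} (T : Finset ι) (v : ι → H)
    (h : ∀ s ∈ T, ∀ t ∈ T, s ≠ t → ⟪v s, v t⟫_ℂ = 0) :
    ‖∑ s ∈ T, v s‖ ^ 2 = ∑ s ∈ T, ‖v s‖ ^ 2 := by
  have key : (⟪∑ s ∈ T, v s, ∑ s ∈ T, v s⟫_ℂ) = ∑ s ∈ T, ⟪v s, v s⟫_ℂ := by
    rw [sum_inner]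
    refine Finset.sum_congr rfl fun s hs => ?_
    rw [inner_sum, Finset.sum_eq_single s
      (fun t ht hts => h s hs t ht (Ne.symm hts)) (fun hs' => absurd hs hs')]
  calc ‖∑ s ∈ T, v s‖ ^ 2
      = RCLike.re (⟪∑ s ∈ T, v s, ∑ s ∈ T, v s⟫_ℂ) := (inner_self_eq_norm_sq _).symm
    _ = RCLike.re (∑ s ∈ T, ⟪v s, v s⟫_ℂ) := by rw [key]
    _ = ∑ s ∈ T, RCLike.re (⟪v s, v s⟫_ℂ) := map_sum _ _ _
    _ = ∑ s ∈ T, ‖v s‖ ^ 2 := Finset.sum_congr rfl fun s _ => inner_self_eq_norm_sq (v s)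

private lemma aeval_of_eq_smul {f : Module.End ℂ H} {μ : ℂ} {x : H} (h : f x = μ • x)
    (p : Polynomial ℂ) : Polynomial.aeval f p x = p.eval μ • x := by
  rcases eq_or_ne x 0 with rfl | hx
  · simp
  · exact Module.End.aeval_apply_of_hasEigenvector
      ⟨Module.End.mem_eigenspace_iff.mpr h, hx⟩

/-- The sector labelled by a string `s ∈ {0,1}^m`: the joint eigenspace on which
each `P i` acts as multiplication by `1 - s i` (so `s i = true` is a violation). -/
noncomputable def sector {m : ℕ} (P : Fin m → (H →ₗ[ℂ] H)) (s : Fin m → Bool) :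
    Submodule ℂ H :=
  ⨅ i : Fin m, Module.End.eigenspace (P i) (if s i then (0 : ℂ) else 1)

/-- Let `P_1, …, P_m` be commuting orthogonal projections, `N = Σ_i (1 - P_i)`,
and `p` a polynomial with `p(0) = 1` and `|p(x)| ≤ δ` for all integers
`1 ≤ x ≤ m`.  Then `p(N)` acts as the identity on the joint ground space
`{ψ : P_i ψ = ψ ∀i}`, and for every `ψ` in the span of the violating sectors,
`‖p(N)ψ‖ ≤ δ‖ψ‖`. -/
theorem poly_of_N_shrinks_violating_sectors {m : ℕ} (P : Fin m → (H →ₗ[ℂ] H))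
    (hproj : ∀ i, (P i) ∘ₗ (P i) = P i)
    (hsa : ∀ i, LinearMap.IsSymmetric (P i))
    (hcomm : ∀ i j, Commute (P i) (P j))
    (N : Module.End ℂ H) (hN : N = ∑ i, (LinearMap.id - P i))
    (δ : ℝ) (p : Polynomial ℂ)
    (hp0 : p.eval 0 = 1)
    (hpδ : ∀ k : ℕ, 1 ≤ k → k ≤ m → ‖p.eval (k : ℂ)‖ ≤ δ) :
    (∀ ψ : H, (∀ i, P i ψ = ψ) → Polynomial.aeval N p ψ = ψ) ∧
    (∀ ψ : H,
      ψ ∈ (⨆ s ∈ {s : Fin m → Bool | s ≠ fun _ => false}, sector P s) →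
      ‖Polynomial.aeval N p ψ‖ ≤ δ * ‖ψ‖) := by
  classical
  constructor
  · intro ψ hg
    have hNψ : N ψ = (0 : ℂ) • ψ := by
      rw [hN]
      simp [LinearMap.sum_apply, LinearMap.sub_apply, hg]
    rw [aeval_of_eq_smul hNψ p, hp0, one_smul]
  · intro ψ hψ
    set S : Set (Fin m → Bool) := {s : Fin m → Bool | s ≠ fun _ => false} with hS
    have hψ' : ψ ∈ ⨆ s : S, sector P (s : Fin m → Bool) := by
      rwa [iSup_subtype''] at *
    obtain ⟨f, hf, hsum⟩ := (Submodule.mem_iSup_iff_exists_finsupp _ _).mp hψ'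
    -- the number of violations in sector s
    set k : S → ℕ := fun s => (Finset.univ.filter fun i => (s : Fin m → Bool) i = true).card
      with hk
    set c : S → ℂ := fun s => p.eval ((k s : ℕ) : ℂ) with hc
    have hψeq : ψ = ∑ s ∈ f.support, f s := by rw [← hsum]; rfl
    -- P i acts on sector s as a scalar
    have hPv : ∀ (s : S) (v : H), v ∈ sector P (s : Fin m → Bool) → ∀ i,
        P i v = (if (s : Fin m → Bool) i then (0 : ℂ) else 1) • v := by
      intro s v hv i
      exact Module.End.mem_eigenspace_iff.mp ((Submodule.mem_iInf _).mp hv i)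
    -- N acts on sector s as the scalar k s
    have hsec : ∀ (s : S) (v : H), v ∈ sector P (s : Fin m → Bool) →
        N v = ((k s : ℕ) : ℂ) • v := by
      intro s v hv
      rw [hN]
      simp only [LinearMap.sum_apply, LinearMap.sub_apply, LinearMap.id_apply]
      have step : ∀ i, v - P i v = (if (s : Fin m → Bool) i then (1 : ℂ) else 0) • v := by
        intro i
        rw [hPv s v hv i]
        by_cases h : (s : Fin m → Bool) i <;> simp [h]
      simp_rw [step, ← Finset.sum_smul]
      congr 1
      rw [Finset.sum_boole]
    have heig : ∀ s : S, Polynomial.aeval N p (f s) = c s • f s := fun s =>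
      aeval_of_eq_smul (hsec s _ (hf s)) p
    -- bounds on k s
    have hk1 : ∀ s : S, 1 ≤ k s := by
      intro s
      have hne : (s : Fin m → Bool) ≠ fun _ => false := s.2
      obtain ⟨i, hi⟩ : ∃ i, (s : Fin m → Bool) i = true := by
        by_contra h
        push_neg at h
        exact hne (funext fun i => by simpa using h i)
      have : i ∈ Finset.univ.filter fun i => (s : Fin m → Bool) i = true := by
        simp [hi]
      exact Finset.card_pos.mpr ⟨i, this⟩
    have hk2 : ∀ s : S, k s ≤ m := fun s =>
      le_trans (Finset.card_filter_le _ _) (by simp)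
    have hcs : ∀ s : S, ‖c s‖ ≤ δ := fun s => hpδ (k s) (hk1 s) (hk2 s)
    -- orthogonality of distinct sectors
    have horth : ∀ s t : S, s ≠ t → ⟪f s, f t⟫_ℂ = 0 := by
      intro s t hst
      have hne : (s : Fin m → Bool) ≠ (t : Fin m → Bool) := fun h => hst (Subtype.ext h)
      obtain ⟨i, hi⟩ : ∃ i, (s : Fin m → Bool) i ≠ (t : Fin m → Bool) i := by
        by_contra h
        push_neg at h
        exact hne (funext h)
      have hv := hPv s (f s) (hf s) i
      have hw := hPv t (f t) (hf t) i
      have hsym := hsa i (f s) (f t)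
      cases hb : (s : Fin m → Bool) i
      · have hb' : (t : Fin m → Bool) i = true := by
          cases hb'' : (t : Fin m → Bool) i
          · exact absurd (hb.trans hb''.symm) hi
          · rfl
        rw [hb] at hv; rw [hb'] at hw
        simp only [if_true, if_false, Bool.false_eq_true, ite_false, one_smul, zero_smul] at hv hw
        calc ⟪f s, f t⟫_ℂ = ⟪P i (f s), f t⟫_ℂ := by rw [hv]
          _ = ⟪f s, P i (f t)⟫_ℂ := hsym
          _ = 0 := by rw [hw, inner_zero_right]
      · have hb' : (t : Fin m → Bool) i = false := by
          cases hb'' : (t : Fin m → Bool) i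
          · rfl
          · exact absurd (hb.trans hb''.symm) hi
        rw [hb] at hv; rw [hb'] at hw
        simp only [if_true, if_false, Bool.false_eq_true, ite_false, one_smul, zero_smul] at hv hw
        calc ⟪f s, f t⟫_ℂ = ⟪f s, P i (f t)⟫_ℂ := by rw [hw]
          _ = ⟪P i (f s), f t⟫_ℂ := hsym.symm
          _ = 0 := by rw [hv, inner_zero_left]
    -- δ is nonnegative (or ψ = 0)
    rcases Nat.eq_zero_or_pos m with hm | hm
    · -- m = 0 : there are no violating sectors, so ψ = 0
      subst hm
      have hempty : IsEmpty S := by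
        constructor
        rintro ⟨s, hs⟩
        exact hs (funext fun i => i.elim0)
      have : f.support = ∅ := Finset.eq_empty_of_isEmpty _
      rw [hψeq, this]
      simp
    · have hδ : 0 ≤ δ := le_trans (norm_nonneg _) (hpδ 1 le_rfl hm)
      have haeval : Polynomial.aeval N p ψ = ∑ s ∈ f.support, c s • f s := by
        rw [hψeq, map_sum]
        exact Finset.sum_congr rfl fun s _ => heig s
      have hsq1 : ‖Polynomial.aeval N p ψ‖ ^ 2 = ∑ s ∈ f.support, ‖c s • f s‖ ^ 2 := by
        rw [haeval]
        refine pythag_aux _ _ fun s hs t ht hst => ?_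
        rw [inner_smul_left, inner_smul_right, horth s t hst, mul_zero, mul_zero]
      have hsq2 : ‖ψ‖ ^ 2 = ∑ s ∈ f.support, ‖f s‖ ^ 2 := by
        rw [hψeq]
        exact pythag_aux _ _ fun s hs t ht hst => horth s t hst
      have hbound : ‖Polynomial.aeval N p ψ‖ ^ 2 ≤ (δ * ‖ψ‖) ^ 2 := by
        rw [hsq1, mul_pow, hsq2, Finset.mul_sum]
        refine Finset.sum_le_sum fun s _ => ?_
        rw [norm_smul, mul_pow]
        have h1 : ‖c s‖ ^ 2 ≤ δ ^ 2 := by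
          have := hcs s
          have h0 : ‖c s‖ = ‖c s‖ := rfl
          rw [h0]
          exact pow_le_pow_left₀ (norm_nonneg _) this 2
        exact mul_le_mul_of_nonneg_right h1 (by positivity)
      calc ‖Polynomial.aeval N p ψ‖
          = Real.sqrt (‖Polynomial.aeval N p ψ‖ ^ 2) := (Real.sqrt_sq (norm_nonneg _)).symm
        _ ≤ Real.sqrt ((δ * ‖ψ‖) ^ 2) := Real.sqrt_le_sqrt hbound
        _ = δ * ‖ψ‖ := Real.sqrt_sq (mul_nonneg hδ (norm_nonneg _))
end
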